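/- arXiv:1503.01818 — 5 statements merged into one kernel-verified Lean document; each statement's English description precedes it below -/
import Mathlib

section
/- Let q₁ > q₃ > q₂ > 0 and 0 < β₂ < β₁ with β₁·q_j < φ'(0) for j = 1,2,3. Then: (i) z₁ > z₃ > z₂; (ii) y₁ > y₃ > y₂; (iii) x₂ > x₃ > x₁ > 0. -/
open scoped BigOperators

open Set Filter

lemma aux13_diffAt {ψ : ℝ → ℝ} {d0 t : ℝ}
    (hψ' : ∀ y : ℝ, 0 < y → y < d0 → deriv ψ y < 0)
    (h1 : 0 < t) (h2 : t < d0) : DifferentiableAt ℝ ψ t := by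
  by_contra h
  have := deriv_zero_of_not_differentiableAt h
  linarith [hψ' t h1 h2]

lemma aux13_deriv_nonpos {g : ℝ → ℝ} {D x lo hi : ℝ}
    (hmem : x ∈ Set.Ioo lo hi) (hanti : StrictAntiOn g (Set.Ioo lo hi))
    (hD : HasDerivAt g D x) : D ≤ 0 := by
  have ht : Tendsto (slope g x) (nhdsWithin x {x}ᶜ) (nhds D) :=
    hasDerivAt_iff_tendsto_slope.mp hD
  have ht' : Tendsto (slope g x) (nhdsWithin x (Set.Ioi x)) (nhds D) :=
    ht.mono_left (nhdsWithin_mono x (fun y hy => ne_of_gt hy))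
  refine le_of_tendsto ht' ?_
  filter_upwards [Ioo_mem_nhdsGT_of_mem ⟨le_refl x, hmem.2⟩] with y hy
  have hxy : x < y := hy.1
  have hgy : g y < g x := hanti hmem ⟨lt_trans hmem.1 hxy, hy.2⟩ hxy
  rw [slope_def_field]
  exact div_nonpos_of_nonpos_of_nonneg (by linarith) (by linarith)

lemma aux13_div_lt_div {A B u v : ℝ} (hu : u < 0) (hv : v < 0)
    (h : A * v < B * u) : A / u < B / v := by
  have hu0 : u ≠ 0 := ne_of_lt hu
  have hv0 : v ≠ 0 := ne_of_lt hv
  have h1 : A / u - B / v = (A * v - B * u) / (u * v) := by field_simp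
  have h2 : (A * v - B * u) / (u * v) < 0 :=
    div_neg_of_neg_of_pos (by linarith) (mul_pos_of_neg_of_neg hu hv)
  linarith [h1 ▸ h2]

lemma aux13_scaled {ψ : ℝ → ℝ} {d0 b β : ℝ}
    (hψ' : ∀ y : ℝ, 0 < y → y < d0 → deriv ψ y < 0)
    (h1 : 0 < β * b) (h2 : β * b < d0) :
    HasDerivAt (fun β : ℝ => ψ (β * b)) (deriv ψ (β * b) * b) β := by
  have hf : HasDerivAt (fun x : ℝ => x * b) b β := hasDerivAt_mul_const b
  exact ((aux13_diffAt hψ' h1 h2).hasDerivAt).comp β hf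

lemma aux13_M_mono {ψ : ℝ → ℝ} {d0 : ℝ}
    (hψpos : ∀ t : ℝ, 0 < t → t < d0 → 0 < ψ t)
    (hψ' : ∀ y : ℝ, 0 < y → y < d0 → deriv ψ y < 0)
    (hA4 : ∀ p q : ℝ, 0 < q → q < p →
      StrictAntiOn (fun β => ψ (β * p) / ψ (β * q)) (Set.Ioo 0 (d0 / p)))
    {a b : ℝ} (ha : 0 < a) (hab : a < b) (hb : b < d0) :
    deriv ψ b * b / ψ b ≤ deriv ψ a * a / ψ a := by
  have hb0 : 0 < b := lt_trans ha hab
  have had : a < d0 := lt_trans hab hb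
  have hpa : 0 < ψ a := hψpos a ha had
  have hpb : 0 < ψ b := hψpos b hb0 hb
  have hDb : HasDerivAt (fun β : ℝ => ψ (β * b)) (deriv ψ b * b) 1 := by
    have := aux13_scaled (b := b) (β := 1) hψ' (by simpa using hb0) (by simpa using hb)
    simpa using this
  have hDa : HasDerivAt (fun β : ℝ => ψ (β * a)) (deriv ψ a * a) 1 := by
    have := aux13_scaled (b := a) (β := 1) hψ' (by simpa using ha) (by simpa using had)
    simpa using this
  have hpa1 : ψ (1 * a) ≠ 0 := by simpa using ne_of_gt hpa
  have hdiv := hDb.div hDa hpa1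
  have hmem : (1:ℝ) ∈ Set.Ioo 0 (d0 / b) :=
    ⟨one_pos, (lt_div_iff₀ hb0).mpr (by simpa using hb)⟩
  have hle := aux13_deriv_nonpos hmem (hA4 b a ha hab) hdiv
  rw [one_mul, one_mul] at hle
  have hnum : deriv ψ b * b * ψ a - ψ b * (deriv ψ a * a) ≤ 0 := by
    by_contra hc
    push_neg at hc
    have := div_pos hc (pow_pos hpa 2)
    linarith
  rw [div_le_div_iff₀ hpb hpa]
  nlinarith

lemma aux13_M_strict {ψ : ℝ → ℝ} {d0 : ℝ}
    (hψpos : ∀ t : ℝ, 0 < t → t < d0 → 0 < ψ t)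
    (hψ' : ∀ y : ℝ, 0 < y → y < d0 → deriv ψ y < 0)
    (hA4 : ∀ p q : ℝ, 0 < q → q < p →
      StrictAntiOn (fun β => ψ (β * p) / ψ (β * q)) (Set.Ioo 0 (d0 / p)))
    {a b : ℝ} (ha : 0 < a) (hab : a < b) (hb : b < d0) :
    deriv ψ b * b / ψ b < deriv ψ a * a / ψ a := by
  have hb0 : 0 < b := lt_trans ha hab
  have had : a < d0 := lt_trans hab hb
  have hd0 : 0 < d0 := lt_trans hb0 hb
  set c := Real.sqrt (a * b) with hc
  have hcc : c * c = a * b := Real.mul_self_sqrt (by positivity)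
  have hc0 : 0 < c := Real.sqrt_pos.mpr (by positivity)
  have hac : a < c := by nlinarith
  have hcb : c < b := by nlinarith
  have hcd : c < d0 := lt_trans hcb hb
  -- chord inequality: ψ c * ψ c > ψ a * ψ b
  have hchord : ψ a * ψ b < ψ c * ψ c := by
    have hanti := hA4 c a ha hac
    have hm1 : (1:ℝ) ∈ Set.Ioo 0 (d0 / c) := ⟨one_pos, (lt_div_iff₀ hc0).mpr (by simpa using hcd)⟩
    have hm2 : c / a ∈ Set.Ioo 0 (d0 / c) := by
      constructor
      · positivity
      · rw [div_lt_div_iff₀ ha hc0]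
        nlinarith
    have h1c : (1:ℝ) < c / a := (lt_div_iff₀ ha).mpr (by simpa using hac)
    have := hanti hm1 hm2 h1c
    simp only [one_mul] at this
    rw [div_mul_eq_mul_div, div_mul_cancel₀ _ (ne_of_gt ha)] at this
    have hb' : c * c / a = b := by field_simp; nlinarith [hcc]
    rw [hb'] at this
    have hpa := hψpos a ha had
    have hpc := hψpos c hc0 hcd
    rw [div_lt_div_iff₀ hpc hpa] at this
    nlinarith
  -- MVT on f = log ∘ ψ ∘ exp
  set m : ℝ → ℝ := fun t => deriv ψ t * t / ψ t with hm
  set f : ℝ → ℝ := fun u => Real.log (ψ (Real.exp u)) with hf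
  have hF : ∀ u : ℝ, 0 < Real.exp u → Real.exp u < d0 → HasDerivAt f (m (Real.exp u)) u := by
    intro u hu1 hu2
    have h1 : HasDerivAt Real.exp (Real.exp u) u := Real.hasDerivAt_exp u
    have h2 : HasDerivAt ψ (deriv ψ (Real.exp u)) (Real.exp u) :=
      (aux13_diffAt hψ' hu1 hu2).hasDerivAt
    have hp : 0 < ψ (Real.exp u) := hψpos _ hu1 hu2
    have h3 : HasDerivAt Real.log (ψ (Real.exp u))⁻¹ (ψ (Real.exp u)) :=
      Real.hasDerivAt_log (ne_of_gt hp)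
    have := (h3.comp u (h2.comp u h1))
    convert this using 1
    case e'_9 => simp only [hm]; field_simp
    all_goals rfl
  have hla : Real.log a < Real.log c := Real.log_lt_log ha hac
  have hlc : Real.log c < Real.log b := Real.log_lt_log hc0 hcb
  have hexp_mem : ∀ u : ℝ, Real.log a ≤ u → u ≤ Real.log b → 0 < Real.exp u ∧ Real.exp u < d0 := by
    intro u h1 h2
    refine ⟨Real.exp_pos u, ?_⟩
    calc Real.exp u ≤ Real.exp (Real.log b) := Real.exp_le_exp.mpr h2
    _ = b := Real.exp_log hb0
    _ < d0 := hb
  have hcont1 : ContinuousOn f (Set.Icc (Real.log a) (Real.log c)) := by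
    intro u hu
    obtain ⟨e1, e2⟩ := hexp_mem u hu.1 (le_trans hu.2 hlc.le)
    exact (hF u e1 e2).continuousAt.continuousWithinAt
  have hd1 : ∀ u ∈ Set.Ioo (Real.log a) (Real.log c), HasDerivAt f (m (Real.exp u)) u := by
    intro u hu
    obtain ⟨e1, e2⟩ := hexp_mem u hu.1.le (le_trans hu.2.le hlc.le)
    exact hF u e1 e2
  obtain ⟨ξ1, hξ1, hs1⟩ := exists_hasDerivAt_eq_slope f (fun u => m (Real.exp u)) hla hcont1 hd1
  have hcont2 : ContinuousOn f (Set.Icc (Real.log c) (Real.log b)) := by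
    intro u hu
    obtain ⟨e1, e2⟩ := hexp_mem u (le_trans hla.le hu.1) hu.2
    exact (hF u e1 e2).continuousAt.continuousWithinAt
  have hd2 : ∀ u ∈ Set.Ioo (Real.log c) (Real.log b), HasDerivAt f (m (Real.exp u)) u := by
    intro u hu
    obtain ⟨e1, e2⟩ := hexp_mem u (le_trans hla.le hu.1.le) hu.2.le
    exact hF u e1 e2
  obtain ⟨ξ2, hξ2, hs2⟩ := exists_hasDerivAt_eq_slope f (fun u => m (Real.exp u)) hlc hcont2 hd2
  have hfa : f (Real.log a) = Real.log (ψ a) := by rw [hf]; simp [Real.exp_log ha]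
  have hfc : f (Real.log c) = Real.log (ψ c) := by rw [hf]; simp [Real.exp_log hc0]
  have hfb : f (Real.log b) = Real.log (ψ b) := by rw [hf]; simp [Real.exp_log hb0]
  have hmid : Real.log c - Real.log a = Real.log b - Real.log c := by
    have : Real.log c = (Real.log a + Real.log b) / 2 := by
      rw [hc, Real.sqrt_eq_rpow, Real.log_rpow (by positivity),
        Real.log_mul (ne_of_gt ha) (ne_of_gt hb0)]
      ring
    linarith
  have hpa := hψpos a ha had
  have hpb := hψpos b hb0 hb
  have hpc := hψpos c hc0 hcd
  have hlog : Real.log (ψ a) + Real.log (ψ b) < Real.log (ψ c) + Real.log (ψ c) := by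
    have := Real.log_lt_log (by positivity) hchord
    rwa [Real.log_mul (ne_of_gt hpa) (ne_of_gt hpb),
      Real.log_mul (ne_of_gt hpc) (ne_of_gt hpc)] at this
  have hslope : m (Real.exp ξ2) < m (Real.exp ξ1) := by
    rw [hs1, hs2, hfa, hfb, hfc]
    rw [← hmid]
    exact (div_lt_div_iff_of_pos_right (by linarith)).mpr (by linarith)
  have ht1a : a < Real.exp ξ1 := by
    calc a = Real.exp (Real.log a) := (Real.exp_log ha).symm
    _ < Real.exp ξ1 := Real.exp_lt_exp.mpr hξ1.1
  have ht1c : Real.exp ξ1 < c := by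
    calc Real.exp ξ1 < Real.exp (Real.log c) := Real.exp_lt_exp.mpr hξ1.2
    _ = c := Real.exp_log hc0
  have ht2c : c < Real.exp ξ2 := by
    calc c = Real.exp (Real.log c) := (Real.exp_log hc0).symm
    _ < Real.exp ξ2 := Real.exp_lt_exp.mpr hξ2.1
  have ht2b : Real.exp ξ2 < b := by
    calc Real.exp ξ2 < Real.exp (Real.log b) := Real.exp_lt_exp.mpr hξ2.2
    _ = b := Real.exp_log hb0
  have h1 : m (Real.exp ξ1) ≤ m a :=
    aux13_M_mono hψpos hψ' hA4 ha ht1a (lt_trans ht1c hcd)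
  have h2 : m b ≤ m (Real.exp ξ2) :=
    aux13_M_mono hψpos hψ' hA4 (lt_trans hc0 ht2c) ht2b hb
  calc deriv ψ b * b / ψ b = m b := rfl
  _ ≤ m (Real.exp ξ2) := h2
  _ < m (Real.exp ξ1) := hslope
  _ ≤ m a := h1
  _ = deriv ψ a * a / ψ a := rfl

/-- Under (A1), (A2), (A4), with `q₁ > q₃ > q₂ > 0` and
`0 < β₂ < β₁`, `β₁ qⱼ < φ'(0)`, for `xⱼ = ψ_β(β₂,qⱼ)/ψ_β(β₁,qⱼ)`,
`yⱼ = ψ(β₂ qⱼ)/ψ_β(β₂,qⱼ)`, `zⱼ = ψ(β₁ qⱼ)/ψ_β(β₁,qⱼ)` with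
`ψ_β(β,q) = q ψ'(βq)`, one has (i) `z₁ > z₃ > z₂`, (ii) `y₁ > y₃ > y₂`,
(iii) `x₂ > x₃ > x₁ > 0`. -/
theorem stmt_13 (φ ψ : ℝ → ℝ)
    (hφC : ContDiff ℝ 2 φ)
    (hodd : ∀ x : ℝ, φ (-x) = -φ x)
    (hφ' : ∀ x : ℝ, 0 < deriv φ x)
    (hφ'' : ∀ x : ℝ, x ≠ 0 → x * deriv (deriv φ) x < 0)
    (hlim : ∃ L : ℝ, Filter.Tendsto φ Filter.atTop (nhds L))
    (hψ : ∀ y : ℝ, 0 < y → y ≤ deriv φ 0 → 0 ≤ ψ y ∧ deriv φ (ψ y) = y)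
    (hψinv : ∀ x : ℝ, 0 ≤ x → ψ (deriv φ x) = x)
    (hψ' : ∀ y : ℝ, 0 < y → y < deriv φ 0 → deriv ψ y < 0)
    (hA2 : ∀ p q : ℝ, 0 < q → q < p →
      StrictMonoOn (fun β => deriv ψ (β * p) / deriv ψ (β * q))
        (Set.Ioo 0 (deriv φ 0 / p)))
    (hA4 : ∀ p q : ℝ, 0 < q → q < p →
      StrictAntiOn (fun β => ψ (β * p) / ψ (β * q))
        (Set.Ioo 0 (deriv φ 0 / p)))
    (q₁ q₂ q₃ β₁ β₂ : ℝ)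
    (hq2 : 0 < q₂) (hq32 : q₂ < q₃) (hq13 : q₃ < q₁)
    (hβ2 : 0 < β₂) (hβ21 : β₂ < β₁)
    (hdom1 : β₁ * q₁ < deriv φ 0) (hdom2 : β₁ * q₂ < deriv φ 0)
    (hdom3 : β₁ * q₃ < deriv φ 0)
    (x₁ x₂ x₃ y₁ y₂ y₃ z₁ z₂ z₃ : ℝ)
    (hx₁ : x₁ = (q₁ * deriv ψ (β₂ * q₁)) / (q₁ * deriv ψ (β₁ * q₁)))
    (hx₂ : x₂ = (q₂ * deriv ψ (β₂ * q₂)) / (q₂ * deriv ψ (β₁ * q₂)))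
    (hx₃ : x₃ = (q₃ * deriv ψ (β₂ * q₃)) / (q₃ * deriv ψ (β₁ * q₃)))
    (hy₁ : y₁ = ψ (β₂ * q₁) / (q₁ * deriv ψ (β₂ * q₁)))
    (hy₂ : y₂ = ψ (β₂ * q₂) / (q₂ * deriv ψ (β₂ * q₂)))
    (hy₃ : y₃ = ψ (β₂ * q₃) / (q₃ * deriv ψ (β₂ * q₃)))
    (hz₁ : z₁ = ψ (β₁ * q₁) / (q₁ * deriv ψ (β₁ * q₁)))
    (hz₂ : z₂ = ψ (β₁ * q₂) / (q₂ * deriv ψ (β₁ * q₂)))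
    (hz₃ : z₃ = ψ (β₁ * q₃) / (q₃ * deriv ψ (β₁ * q₃))) :
    (z₂ < z₃ ∧ z₃ < z₁) ∧ (y₂ < y₃ ∧ y₃ < y₁) ∧ (0 < x₁ ∧ x₁ < x₃ ∧ x₃ < x₂) := by
  have hβ1 : 0 < β₁ := lt_trans hβ2 hβ21
  have hq3 : 0 < q₃ := lt_trans hq2 hq32
  have hq1 : 0 < q₁ := lt_trans hq3 hq13
  have hψpos : ∀ t : ℝ, 0 < t → t < deriv φ 0 → 0 < ψ t := by
    intro t ht htd
    obtain ⟨h0, he⟩ := hψ t ht htd.le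
    rcases h0.lt_or_eq with h | h
    · exact h
    · exfalso
      rw [← h] at he
      linarith
  -- key lemma for (i), (ii)
  have key : ∀ β q p : ℝ, 0 < β → 0 < q → q < p → β * p < deriv φ 0 →
      ψ (β * q) / (q * deriv ψ (β * q)) < ψ (β * p) / (p * deriv ψ (β * p)) := by
    intro β q p hβ hq hqp hdom
    have hp : 0 < p := lt_trans hq hqp
    have ha : 0 < β * q := mul_pos hβ hq
    have hab : β * q < β * p := mul_lt_mul_of_pos_left hqp hβ
    have hbd : 0 < β * p := lt_trans ha hab
    have had : β * q < deriv φ 0 := lt_trans hab hdom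
    have hM := aux13_M_strict hψpos hψ' hA4 ha hab hdom
    have hpq := hψpos (β * q) ha had
    have hpp := hψpos (β * p) hbd hdom
    have hDq : deriv ψ (β * q) < 0 := hψ' _ ha had
    have hDp : deriv ψ (β * p) < 0 := hψ' _ hbd hdom
    rw [div_lt_div_iff₀ hpp hpq] at hM
    have h4 : deriv ψ (β * p) * p * ψ (β * q) < deriv ψ (β * q) * q * ψ (β * p) := by
      refine lt_of_mul_lt_mul_left ?_ hβ.le
      calc β * (deriv ψ (β * p) * p * ψ (β * q))
          = deriv ψ (β * p) * (β * p) * ψ (β * q) := by ring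
      _ < deriv ψ (β * q) * (β * q) * ψ (β * p) := hM
      _ = β * (deriv ψ (β * q) * q * ψ (β * p)) := by ring
    exact aux13_div_lt_div (mul_neg_of_pos_of_neg hq hDq)
      (mul_neg_of_pos_of_neg hp hDp) (by linear_combination h4)
  -- key lemma for (iii)
  have keyx : ∀ q p : ℝ, 0 < q → q < p → β₁ * p < deriv φ 0 →
      (p * deriv ψ (β₂ * p)) / (p * deriv ψ (β₁ * p)) <
      (q * deriv ψ (β₂ * q)) / (q * deriv ψ (β₁ * q)) := by
    intro q p hq hqp hdom
    have hp : 0 < p := lt_trans hq hqp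
    have hm2 : β₁ ∈ Set.Ioo 0 (deriv φ 0 / p) := ⟨hβ1, (lt_div_iff₀ hp).mpr hdom⟩
    have hm1 : β₂ ∈ Set.Ioo 0 (deriv φ 0 / p) := ⟨hβ2, lt_trans hβ21 hm2.2⟩
    have h := hA2 p q hq hqp hm1 hm2 hβ21
    simp only at h
    have hdq : β₁ * q < deriv φ 0 := (mul_lt_mul_of_pos_left hqp hβ1).trans hdom
    have hA : deriv ψ (β₂ * p) < 0 :=
      hψ' _ (mul_pos hβ2 hp) ((mul_lt_mul_of_pos_right hβ21 hp).trans hdom)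
    have hB : deriv ψ (β₂ * q) < 0 :=
      hψ' _ (mul_pos hβ2 hq) ((mul_lt_mul_of_pos_right hβ21 hq).trans hdq)
    have hC : deriv ψ (β₁ * p) < 0 := hψ' _ (mul_pos hβ1 hp) hdom
    have hD : deriv ψ (β₁ * q) < 0 := hψ' _ (mul_pos hβ1 hq) hdq
    have hBD : 0 < deriv ψ (β₂ * q) * deriv ψ (β₁ * q) := mul_pos_of_neg_of_neg hB hD
    have h2 : deriv ψ (β₂ * p) * deriv ψ (β₁ * q) <
        deriv ψ (β₁ * p) * deriv ψ (β₂ * q) := by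
      have h3 := mul_lt_mul_of_pos_right h hBD
      have e1 : deriv ψ (β₂ * p) / deriv ψ (β₂ * q) *
          (deriv ψ (β₂ * q) * deriv ψ (β₁ * q)) =
          deriv ψ (β₂ * p) * deriv ψ (β₁ * q) := by
        field_simp [ne_of_lt hB, ne_of_lt hD]
      have e2 : deriv ψ (β₁ * p) / deriv ψ (β₁ * q) *
          (deriv ψ (β₂ * q) * deriv ψ (β₁ * q)) =
          deriv ψ (β₁ * p) * deriv ψ (β₂ * q) := by
        field_simp [ne_of_lt hB, ne_of_lt hD]
      rwa [e1, e2] at h3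
    rw [mul_div_mul_left _ _ (ne_of_gt hp), mul_div_mul_left _ _ (ne_of_gt hq)]
    exact aux13_div_lt_div hC hD (by linear_combination h2)
  refine ⟨⟨?_, ?_⟩, ⟨?_, ?_⟩, ?_, ?_, ?_⟩
  · rw [hz₂, hz₃]; exact key β₁ q₂ q₃ hβ1 hq2 hq32 hdom3
  · rw [hz₃, hz₁]; exact key β₁ q₃ q₁ hβ1 hq3 hq13 hdom1
  · rw [hy₂, hy₃]
    exact key β₂ q₂ q₃ hβ2 hq2 hq32 ((mul_lt_mul_of_pos_right hβ21 hq3).trans hdom3)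
  · rw [hy₃, hy₁]
    exact key β₂ q₃ q₁ hβ2 hq3 hq13 ((mul_lt_mul_of_pos_right hβ21 hq1).trans hdom1)
  · rw [hx₁]
    refine div_pos_of_neg_of_neg ?_ ?_
    · exact mul_neg_of_pos_of_neg hq1
        (hψ' _ (mul_pos hβ2 hq1) ((mul_lt_mul_of_pos_right hβ21 hq1).trans hdom1))
    · exact mul_neg_of_pos_of_neg hq1 (hψ' _ (mul_pos hβ1 hq1) hdom1)
  · rw [hx₁, hx₃]; exact keyx q₃ q₁ hq3 hq13 hdom1
  · rw [hx₃, hx₂]; exact keyx q₂ q₃ hq2 hq32 hdom3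
end

section
/- Let q₁, q₂, q₃ > 0 be pairwise distinct with q₁ > q₂ and q₁ > q₃, and let 0 < β₂ < β₁ with β₁·q_j < φ'(0) for j = 1,2,3. Then E > 0, where E = x₃(z₁ − z₂) + x₁x₃(y₁ − y₂) + x₂(z₁ − z₃) + x₁x₂(y₁ − y₃) + x₁(z₃ − z₂) + (y₃ − y₂)(x₁x₂ + x₂x₃ − x₁x₃). -/
open scoped BigOperators

section Aux
open Set Filter

private lemma lt_of_mul_lt_mul_right_neg' {x y w : ℝ} (hw : w < 0) (h : x * w < y * w) :
    y < x := by nlinarith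

private lemma deriv_nonpos_of_strictAntiOn' {f : ℝ → ℝ} {s : Set ℝ} (hs : IsOpen s)
    (hf : StrictAntiOn f s) {x : ℝ} (hx : x ∈ s) {d : ℝ} (hd : HasDerivAt f d x) :
    d ≤ 0 := by
  have h1 : Tendsto (slope f x) (nhdsWithin x (Set.Ioi x)) (nhds d) :=
    (hasDerivAt_iff_tendsto_slope.mp hd).mono_left
      (nhdsWithin_mono x fun y hy => Set.mem_compl_singleton_iff.mpr (ne_of_gt hy))
  refine le_of_tendsto h1 ?_
  filter_upwards [self_mem_nhdsWithin, nhdsWithin_le_nhds (hs.mem_nhds hx)] with y hy hys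
  have hxy : x < y := hy
  have hlt : f y < f x := hf hx hys hxy
  rw [slope_def_field]
  exact div_nonpos_of_nonpos_of_nonneg (by linarith) (by linarith)

private lemma key_alg' (a1 a2 b1 b2 D3 P1 P2 P3 Q1 Q2 Q3 : ℝ)
    (hP1 : P1 < 0) (hP3 : P3 < 0) (hQ1 : Q1 < 0) (hQ3 : Q3 < 0)
    (ha1 : 0 < a1)
    (hA12 : P2 * Q1 < P1 * Q2)
    (hA13 : P3 * Q1 < P1 * Q3)
    (hC3 : P1 * a2 ≤ P2 * a1)
    (hC4 : Q1 * b2 ≤ Q2 * b1)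
    (hC5 : (b1 - a1) * Q3 < D3 * Q1) :
    (a1 + b1) * (P2 * Q3 + P3 * Q2) - (a2 + b2) * (P1 * Q3 + P3 * Q1)
      + D3 * (P1 * Q2 - P2 * Q1) < 0 := by
  have t1 : 0 ≤ (-Q1) * (P2 * a1 - P1 * a2) := mul_nonneg (by linarith) (by linarith)
  have t2 : 0 ≤ (-P1) * (Q2 * b1 - Q1 * b2) := mul_nonneg (by linarith) (by linarith)
  have t3 : 0 < a1 * (P1 * Q2 - P2 * Q1) := mul_pos ha1 (by linarith)
  have hM1 : Q1 * ((a1 + b1) * P2) - Q1 * ((a2 + b2) * P1)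
      + (b1 - a1) * (P1 * Q2 - P2 * Q1) < 0 := by nlinarith [t1, t2, t3]
  have hΔ : 0 < (D3 * Q1 - (b1 - a1) * Q3) * (P1 * Q2 - P2 * Q1) :=
    mul_pos (by linarith) (by linarith)
  have hQ1T : 0 < Q1 * ((a1 + b1) * (P2 * Q3 + P3 * Q2) - (a2 + b2) * (P1 * Q3 + P3 * Q1)
      + D3 * (P1 * Q2 - P2 * Q1)) := by
    rcases le_or_gt 0 ((a1 + b1) * Q2 - (a2 + b2) * Q1) with hK | hK
    · have h1 : 0 < (-Q3) * (-(Q1 * ((a1 + b1) * P2) - Q1 * ((a2 + b2) * P1)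
          + (b1 - a1) * (P1 * Q2 - P2 * Q1))) := mul_pos (by linarith) (by linarith)
      have h2 : 0 ≤ (P3 * Q1) * ((a1 + b1) * Q2 - (a2 + b2) * Q1) :=
        mul_nonneg (mul_pos_of_neg_of_neg hP3 hQ1).le hK
      nlinarith [h1, h2, hΔ]
    · have hM2 : Q1 * ((a1 + b1) * P2) - Q1 * ((a2 + b2) * P1)
          + (b1 - a1) * (P1 * Q2 - P2 * Q1)
          + P1 * ((a1 + b1) * Q2 - (a2 + b2) * Q1) ≤ 0 := by nlinarith [t1, t2]
      have h1 : 0 ≤ (-Q3) * (-(Q1 * ((a1 + b1) * P2) - Q1 * ((a2 + b2) * P1)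
          + (b1 - a1) * (P1 * Q2 - P2 * Q1)
          + P1 * ((a1 + b1) * Q2 - (a2 + b2) * Q1))) :=
        mul_nonneg (by linarith) (by linarith)
      have h2 : (P1 * Q3) * ((a1 + b1) * Q2 - (a2 + b2) * Q1)
          < (P3 * Q1) * ((a1 + b1) * Q2 - (a2 + b2) * Q1) :=
        mul_lt_mul_of_neg_right hA13 hK
      nlinarith [h1, h2, hΔ]
  nlinarith [hQ1T]


end Aux

set_option maxHeartbeats 4000000 in
/-- Under (A1), (A2), (A4), with `q₁, q₂, q₃ > 0` pairwise distinct,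
`q₁ > q₂`, `q₁ > q₃`, and `0 < β₂ < β₁`, `β₁ qⱼ < φ'(0)`, the expression
`E = x₃(z₁−z₂) + x₁x₃(y₁−y₂) + x₂(z₁−z₃) + x₁x₂(y₁−y₃) + x₁(z₃−z₂)
+ (y₃−y₂)(x₁x₂ + x₂x₃ − x₁x₃)` is positive. -/
theorem stmt_15 (φ ψ : ℝ → ℝ)
    (hφC : ContDiff ℝ 2 φ)
    (hodd : ∀ x : ℝ, φ (-x) = -φ x)
    (hφ' : ∀ x : ℝ, 0 < deriv φ x)
    (hφ'' : ∀ x : ℝ, x ≠ 0 → x * deriv (deriv φ) x < 0)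
    (hlim : ∃ L : ℝ, Filter.Tendsto φ Filter.atTop (nhds L))
    (hψ : ∀ y : ℝ, 0 < y → y ≤ deriv φ 0 → 0 ≤ ψ y ∧ deriv φ (ψ y) = y)
    (hψinv : ∀ x : ℝ, 0 ≤ x → ψ (deriv φ x) = x)
    (hψ' : ∀ y : ℝ, 0 < y → y < deriv φ 0 → deriv ψ y < 0)
    (hA2 : ∀ p q : ℝ, 0 < q → q < p →
      StrictMonoOn (fun β => deriv ψ (β * p) / deriv ψ (β * q))
        (Set.Ioo 0 (deriv φ 0 / p)))
    (hA4 : ∀ p q : ℝ, 0 < q → q < p →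
      StrictAntiOn (fun β => ψ (β * p) / ψ (β * q))
        (Set.Ioo 0 (deriv φ 0 / p)))
    (q₁ q₂ q₃ β₁ β₂ : ℝ)
    (hq2 : 0 < q₂) (hq3 : 0 < q₃) (hq23 : q₂ ≠ q₃)
    (hq12 : q₂ < q₁) (hq13 : q₃ < q₁)
    (hβ2 : 0 < β₂) (hβ21 : β₂ < β₁)
    (hdom1 : β₁ * q₁ < deriv φ 0) (hdom2 : β₁ * q₂ < deriv φ 0)
    (hdom3 : β₁ * q₃ < deriv φ 0)
    (x₁ x₂ x₃ y₁ y₂ y₃ z₁ z₂ z₃ : ℝ)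
    (hx₁ : x₁ = (q₁ * deriv ψ (β₂ * q₁)) / (q₁ * deriv ψ (β₁ * q₁)))
    (hx₂ : x₂ = (q₂ * deriv ψ (β₂ * q₂)) / (q₂ * deriv ψ (β₁ * q₂)))
    (hx₃ : x₃ = (q₃ * deriv ψ (β₂ * q₃)) / (q₃ * deriv ψ (β₁ * q₃)))
    (hy₁ : y₁ = ψ (β₂ * q₁) / (q₁ * deriv ψ (β₂ * q₁)))
    (hy₂ : y₂ = ψ (β₂ * q₂) / (q₂ * deriv ψ (β₂ * q₂)))
    (hy₃ : y₃ = ψ (β₂ * q₃) / (q₃ * deriv ψ (β₂ * q₃)))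
    (hz₁ : z₁ = ψ (β₁ * q₁) / (q₁ * deriv ψ (β₁ * q₁)))
    (hz₂ : z₂ = ψ (β₁ * q₂) / (q₂ * deriv ψ (β₁ * q₂)))
    (hz₃ : z₃ = ψ (β₁ * q₃) / (q₃ * deriv ψ (β₁ * q₃))) :
    0 < x₃ * (z₁ - z₂) + x₁ * x₃ * (y₁ - y₂) + x₂ * (z₁ - z₃) +
      x₁ * x₂ * (y₁ - y₃) + x₁ * (z₃ - z₂) +
      (y₃ - y₂) * (x₁ * x₂ + x₂ * x₃ - x₁ * x₃) := by
  -- basic positivity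
  have hq1 : 0 < q₁ := hq2.trans hq12
  have hβ1 : 0 < β₁ := hβ2.trans hβ21
  -- facts at points of (0, deriv φ 0)
  have hpt : ∀ t : ℝ, 0 < t → t < deriv φ 0 → deriv ψ t < 0 ∧ 0 < ψ t := by
    intro t h0 h1
    refine ⟨hψ' t h0 h1, ?_⟩
    obtain ⟨hge, hder⟩ := hψ t h0 h1.le
    rcases hge.lt_or_eq with h | h
    · exact h
    · exfalso
      rw [← h] at hder
      exact absurd hder h1.ne'
  -- the six points
  have m11 : 0 < β₁ * q₁ := mul_pos hβ1 hq1
  have m12 : 0 < β₁ * q₂ := mul_pos hβ1 hq2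
  have m13 : 0 < β₁ * q₃ := mul_pos hβ1 hq3
  have m21 : 0 < β₂ * q₁ := mul_pos hβ2 hq1
  have m22 : 0 < β₂ * q₂ := mul_pos hβ2 hq2
  have m23 : 0 < β₂ * q₃ := mul_pos hβ2 hq3
  have d21 : β₂ * q₁ < deriv φ 0 := (mul_lt_mul_of_pos_right hβ21 hq1).trans hdom1
  have d22 : β₂ * q₂ < deriv φ 0 := (mul_lt_mul_of_pos_right hβ21 hq2).trans hdom2
  have d23 : β₂ * q₃ < deriv φ 0 := (mul_lt_mul_of_pos_right hβ21 hq3).trans hdom3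
  have hu1 : deriv ψ (β₁ * q₁) < 0 := (hpt _ m11 hdom1).1
  have hu2 : deriv ψ (β₁ * q₂) < 0 := (hpt _ m12 hdom2).1
  have hu3 : deriv ψ (β₁ * q₃) < 0 := (hpt _ m13 hdom3).1
  have hv1 : deriv ψ (β₂ * q₁) < 0 := (hpt _ m21 d21).1
  have hv2 : deriv ψ (β₂ * q₂) < 0 := (hpt _ m22 d22).1
  have hv3 : deriv ψ (β₂ * q₃) < 0 := (hpt _ m23 d23).1
  have ha1 : 0 < ψ (β₁ * q₁) := (hpt _ m11 hdom1).2
  have ha2 : 0 < ψ (β₁ * q₂) := (hpt _ m12 hdom2).2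
  have hb1 : 0 < ψ (β₂ * q₁) := (hpt _ m21 d21).2
  have hb2 : 0 < ψ (β₂ * q₂) := (hpt _ m22 d22).2
  -- derivative of β ↦ ψ (β * q) on [β₂, β₁]
  have hD : ∀ q : ℝ, 0 < q → β₁ * q < deriv φ 0 → ∀ β ∈ Set.Icc β₂ β₁,
      HasDerivAt (fun b => ψ (b * q)) (deriv ψ (β * q) * q) β := by
    intro q hq hdom β hβ
    have h0 : 0 < β * q := mul_pos (lt_of_lt_of_le hβ2 hβ.1) hq
    have h1 : β * q < deriv φ 0 :=
      lt_of_le_of_lt (mul_le_mul_of_nonneg_right hβ.2 hq.le) hdom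
    have hdiff := (differentiableAt_of_deriv_ne_zero (ne_of_lt (hψ' _ h0 h1))).hasDerivAt
    exact hdiff.comp β (hasDerivAt_mul_const q)
  have hcont : ∀ q : ℝ, 0 < q → β₁ * q < deriv φ 0 →
      ContinuousOn (fun b => ψ (b * q)) (Set.Icc β₂ β₁) := fun q hq hdom x hx =>
    ((hD q hq hdom x hx).continuousAt).continuousWithinAt
  -- A2 cross-multiplied inequality
  have hA2gen : ∀ γ δ : ℝ, 0 < γ → γ < δ → δ * q₁ < deriv φ 0 → ∀ q, 0 < q → q < q₁ →
      deriv ψ (γ * q₁) * deriv ψ (δ * q) < deriv ψ (δ * q₁) * deriv ψ (γ * q) := by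
    intro γ δ hγ hγδ hdom q hq hqlt
    have hδ : 0 < δ := hγ.trans hγδ
    have hγdom : γ * q₁ < deriv φ 0 := (mul_lt_mul_of_pos_right hγδ hq1).trans hdom
    have hγm : γ ∈ Set.Ioo (0:ℝ) (deriv φ 0 / q₁) := ⟨hγ, (lt_div_iff₀ hq1).2 hγdom⟩
    have hδm : δ ∈ Set.Ioo (0:ℝ) (deriv φ 0 / q₁) := ⟨hδ, (lt_div_iff₀ hq1).2 hdom⟩
    have h := hA2 q₁ q hq hqlt hγm hδm hγδ
    simp only at h
    have hγq : deriv ψ (γ * q) < 0 := by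
      refine hψ' _ (mul_pos hγ hq) ?_
      calc γ * q < γ * q₁ := mul_lt_mul_of_pos_left hqlt hγ
        _ < deriv φ 0 := hγdom
    have hδq : deriv ψ (δ * q) < 0 := by
      refine hψ' _ (mul_pos hδ hq) ?_
      calc δ * q < δ * q₁ := mul_lt_mul_of_pos_left hqlt hδ
        _ < deriv φ 0 := hdom
    have hm := mul_lt_mul_of_pos_right h (mul_pos_of_neg_of_neg hγq hδq)
    have hne1 : deriv ψ (γ * q) ≠ 0 := ne_of_lt hγq
    have hne2 : deriv ψ (δ * q) ≠ 0 := ne_of_lt hδq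
    have e1 : deriv ψ (γ * q₁) / deriv ψ (γ * q) * (deriv ψ (γ * q) * deriv ψ (δ * q))
        = deriv ψ (γ * q₁) * deriv ψ (δ * q) := by
      field_simp
    have e2 : deriv ψ (δ * q₁) / deriv ψ (δ * q) * (deriv ψ (γ * q) * deriv ψ (δ * q))
        = deriv ψ (δ * q₁) * deriv ψ (γ * q) := by
      field_simp
    rw [e1, e2] at hm
    exact hm
  have hA12raw := hA2gen β₂ β₁ hβ2 hβ21 hdom1 q₂ hq2 hq12
  have hA13raw := hA2gen β₂ β₁ hβ2 hβ21 hdom1 q₃ hq3 hq13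
  -- b₁ > a₁ via Lagrange MVT
  have hb1a1 : ψ (β₁ * q₁) < ψ (β₂ * q₁) := by
    obtain ⟨c, hc, hs⟩ := exists_hasDerivAt_eq_slope (fun b => ψ (b * q₁))
      (fun β => deriv ψ (β * q₁) * q₁) hβ21 (hcont q₁ hq1 hdom1)
      (fun x hx => hD q₁ hq1 hdom1 x (Set.mem_Icc_of_Ioo hx))
    have hcq : deriv ψ (c * q₁) < 0 := by
      refine hψ' _ (mul_pos (hβ2.trans hc.1) hq1) ?_
      exact (mul_lt_mul_of_pos_right hc.2 hq1).trans hdom1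
    have hneg : deriv ψ (c * q₁) * q₁ < 0 := mul_neg_of_neg_of_pos hcq hq1
    rw [hs] at hneg
    have hd : 0 < β₁ - β₂ := sub_pos.2 hβ21
    have := mul_neg_of_neg_of_pos hneg hd
    rw [div_mul_cancel₀ _ (ne_of_gt hd)] at this
    linarith
  -- C5 : Cauchy MVT + A2 at the intermediate point
  have hC5 : (ψ (β₂ * q₁) - ψ (β₁ * q₁)) * (q₃ * deriv ψ (β₂ * q₃))
      < (ψ (β₂ * q₃) - ψ (β₁ * q₃)) * (q₁ * deriv ψ (β₂ * q₁)) := by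
    obtain ⟨c, hc, hcid⟩ := exists_ratio_hasDerivAt_eq_ratio_slope (fun b => ψ (b * q₁))
      (fun β => deriv ψ (β * q₁) * q₁) hβ21 (hcont q₁ hq1 hdom1)
      (fun x hx => hD q₁ hq1 hdom1 x (Set.mem_Icc_of_Ioo hx))
      (fun b => ψ (b * q₃)) (fun β => deriv ψ (β * q₃) * q₃) (hcont q₃ hq3 hdom3)
      (fun x hx => hD q₃ hq3 hdom3 x (Set.mem_Icc_of_Ioo hx))
    have hw1 : deriv ψ (c * q₁) < 0 := by
      refine hψ' _ (mul_pos (hβ2.trans hc.1) hq1) ?_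
      exact (mul_lt_mul_of_pos_right hc.2 hq1).trans hdom1
    have hcross := hA2gen β₂ c hβ2 hc.1 ((mul_lt_mul_of_pos_right hc.2 hq1).trans hdom1)
      q₃ hq3 hq13
    have hD1 : 0 < ψ (β₂ * q₁) - ψ (β₁ * q₁) := sub_pos.2 hb1a1
    have h1 := mul_lt_mul_of_pos_left hcross (mul_pos hD1 hq3)
    have hid2 : (ψ (β₂ * q₃) - ψ (β₁ * q₃)) * (deriv ψ (c * q₁) * q₁) * deriv ψ (β₂ * q₁)
        = (ψ (β₂ * q₁) - ψ (β₁ * q₁)) * (deriv ψ (c * q₃) * q₃) * deriv ψ (β₂ * q₁) := by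
      linear_combination (-(deriv ψ (β₂ * q₁))) * hcid
    have h2 : ((ψ (β₂ * q₃) - ψ (β₁ * q₃)) * (q₁ * deriv ψ (β₂ * q₁))) * deriv ψ (c * q₁)
        < ((ψ (β₂ * q₁) - ψ (β₁ * q₁)) * (q₃ * deriv ψ (β₂ * q₃))) * deriv ψ (c * q₁) := by
      nlinarith [h1, hid2]
    exact lt_of_mul_lt_mul_right_neg' hw1 h2
  -- C3, C4 : derivative of the A4-ratio is nonpositive at β₁ and β₂
  have hratio : ∀ β : ℝ, β ∈ Set.Icc β₂ β₁ → 0 < ψ (β * q₂) →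
      deriv ψ (β * q₁) * q₁ * ψ (β * q₂) - ψ (β * q₁) * (deriv ψ (β * q₂) * q₂) ≤ 0 := by
    intro β hβ hpos
    have hmem : β ∈ Set.Ioo (0:ℝ) (deriv φ 0 / q₁) :=
      ⟨hβ2.trans_le hβ.1, (lt_div_iff₀ hq1).2 (lt_of_le_of_lt
        (mul_le_mul_of_nonneg_right hβ.2 hq1.le) hdom1)⟩
    have h1 := hD q₁ hq1 hdom1 β hβ
    have h2 := hD q₂ hq2 hdom2 β hβ
    have hdiv := h1.div h2 (ne_of_gt hpos)
    have hle := deriv_nonpos_of_strictAntiOn' isOpen_Ioo (hA4 q₁ q₂ hq2 hq12) hmem hdiv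
    rcases div_nonpos_iff.mp hle with ⟨-, hden⟩ | ⟨hnum, -⟩
    · exfalso
      have : (0:ℝ) < ψ (β * q₂) ^ 2 := pow_pos hpos 2
      linarith
    · exact hnum
  have hC3 : (q₁ * deriv ψ (β₁ * q₁)) * ψ (β₁ * q₂)
      ≤ (q₂ * deriv ψ (β₁ * q₂)) * ψ (β₁ * q₁) := by
    have := hratio β₁ ⟨hβ21.le, le_refl β₁⟩ ha2
    nlinarith [this]
  have hC4 : (q₁ * deriv ψ (β₂ * q₁)) * ψ (β₂ * q₂)
      ≤ (q₂ * deriv ψ (β₂ * q₂)) * ψ (β₂ * q₁) := by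
    have := hratio β₂ ⟨le_refl β₂, hβ21.le⟩ hb2
    nlinarith [this]
  -- instantiate the algebraic lemma
  have hP1 : q₁ * deriv ψ (β₁ * q₁) < 0 := mul_neg_of_pos_of_neg hq1 hu1
  have hP2 : q₂ * deriv ψ (β₁ * q₂) < 0 := mul_neg_of_pos_of_neg hq2 hu2
  have hP3 : q₃ * deriv ψ (β₁ * q₃) < 0 := mul_neg_of_pos_of_neg hq3 hu3
  have hQ1 : q₁ * deriv ψ (β₂ * q₁) < 0 := mul_neg_of_pos_of_neg hq1 hv1
  have hQ2 : q₂ * deriv ψ (β₂ * q₂) < 0 := mul_neg_of_pos_of_neg hq2 hv2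
  have hQ3 : q₃ * deriv ψ (β₂ * q₃) < 0 := mul_neg_of_pos_of_neg hq3 hv3
  have hA12 : (q₂ * deriv ψ (β₁ * q₂)) * (q₁ * deriv ψ (β₂ * q₁))
      < (q₁ * deriv ψ (β₁ * q₁)) * (q₂ * deriv ψ (β₂ * q₂)) := by
    nlinarith [mul_lt_mul_of_pos_left hA12raw (mul_pos hq1 hq2)]
  have hA13 : (q₃ * deriv ψ (β₁ * q₃)) * (q₁ * deriv ψ (β₂ * q₁))
      < (q₁ * deriv ψ (β₁ * q₁)) * (q₃ * deriv ψ (β₂ * q₃)) := by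
    nlinarith [mul_lt_mul_of_pos_left hA13raw (mul_pos hq1 hq3)]
  have hT := key_alg' (ψ (β₁ * q₁)) (ψ (β₁ * q₂)) (ψ (β₂ * q₁)) (ψ (β₂ * q₂))
    (ψ (β₂ * q₃) - ψ (β₁ * q₃))
    (q₁ * deriv ψ (β₁ * q₁)) (q₂ * deriv ψ (β₁ * q₂)) (q₃ * deriv ψ (β₁ * q₃))
    (q₁ * deriv ψ (β₂ * q₁)) (q₂ * deriv ψ (β₂ * q₂)) (q₃ * deriv ψ (β₂ * q₃))
    hP1 hP3 hQ1 hQ3 ha1 hA12 hA13 hC3 hC4 hC5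
  have hprod : (q₁ * deriv ψ (β₁ * q₁)) * (q₂ * deriv ψ (β₁ * q₂))
      * (q₃ * deriv ψ (β₁ * q₃)) < 0 :=
    mul_neg_of_pos_of_neg (mul_pos_of_neg_of_neg hP1 hP2) hP3
  have key := div_pos_of_neg_of_neg hT hprod
  subst hx₁ hx₂ hx₃ hy₁ hy₂ hy₃ hz₁ hz₂ hz₃
  set u1 := deriv ψ (β₁ * q₁) with hu1d
  set u2 := deriv ψ (β₁ * q₂) with hu2d
  set u3 := deriv ψ (β₁ * q₃) with hu3d
  set v1 := deriv ψ (β₂ * q₁) with hv1d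
  set v2 := deriv ψ (β₂ * q₂) with hv2d
  set v3 := deriv ψ (β₂ * q₃) with hv3d
  set a1 := ψ (β₁ * q₁) with ha1d
  set a2 := ψ (β₁ * q₂) with ha2d
  set a3 := ψ (β₁ * q₃) with ha3d
  set b1 := ψ (β₂ * q₁) with hb1d
  set b2 := ψ (β₂ * q₂) with hb2d
  set b3 := ψ (β₂ * q₃) with hb3d
  have hq1n : q₁ ≠ 0 := hq1.ne'
  have hq2n : q₂ ≠ 0 := hq2.ne'
  have hq3n : q₃ ≠ 0 := hq3.ne'
  have hu1n : u1 ≠ 0 := ne_of_lt hu1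
  have hu2n : u2 ≠ 0 := ne_of_lt hu2
  have hu3n : u3 ≠ 0 := ne_of_lt hu3
  have hv1n : v1 ≠ 0 := ne_of_lt hv1
  have hv2n : v2 ≠ 0 := ne_of_lt hv2
  have hv3n : v3 ≠ 0 := ne_of_lt hv3
  convert key using 1
  · rfl
  field_simp
  ring
end

section
/- Let q₃ > q₁ > q₂ > 0 and 0 < β₂ < β₁ with β₁·q_j < φ'(0) for j = 1,2,3. Then: (i) x₂ > x₁ > x₃ > 0; (ii) z₃ > z₁ > z₂; (iii) y₃ > y₁ > y₂; (iv) z₁/x₁ > z₂/x₂. -/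
set_option maxHeartbeats 1000000

open Set

lemma aux_div_lt_div_of_neg {a b c d : ℝ} (hb : b < 0) (hd : d < 0) (h : a * d < c * b) :
    a / b < c / d := by
  have hbd : 0 < d * b := mul_pos_of_neg_of_neg hd hb
  have key : c / d - a / b = (c * b - a * d) / (d * b) := by
    rw [div_sub_div _ _ hd.ne hb.ne, mul_comm d b]
    ring_nf
  have h2 : 0 < (c * b - a * d) / (d * b) := div_pos (by linarith) hbd
  linarith [key ▸ h2]

lemma aux_div_div (A B C : ℝ) (hB : B ≠ 0) : (A / B) / (C / B) = A / C := by
  rcases eq_or_ne C 0 with h | h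
  · simp [h]
  · field_simp

lemma aux_psi_pos (φ ψ : ℝ → ℝ)
    (hψ : ∀ y : ℝ, 0 < y → y ≤ deriv φ 0 → 0 ≤ ψ y ∧ deriv φ (ψ y) = y)
    {y : ℝ} (h1 : 0 < y) (h2 : y < deriv φ 0) : 0 < ψ y := by
  obtain ⟨h0, he⟩ := hψ y h1 h2.le
  rcases h0.lt_or_eq with h | h
  · exact h
  · rw [← h] at he; linarith

lemma aux_star (φ ψ : ℝ → ℝ)
    (hψ : ∀ y : ℝ, 0 < y → y ≤ deriv φ 0 → 0 ≤ ψ y ∧ deriv φ (ψ y) = y)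
    (hψ' : ∀ y : ℝ, 0 < y → y < deriv φ 0 → deriv ψ y < 0)
    (hA2 : ∀ p q : ℝ, 0 < q → q < p →
      StrictMonoOn (fun β => deriv ψ (β * p) / deriv ψ (β * q))
        (Set.Ioo 0 (deriv φ 0 / p)))
    (hA4 : ∀ p q : ℝ, 0 < q → q < p →
      StrictAntiOn (fun β => ψ (β * p) / ψ (β * q))
        (Set.Ioo 0 (deriv φ 0 / p)))
    (p q β : ℝ) (hq : 0 < q) (hqp : q < p) (hβ : 0 < β) (hdom : β * p < deriv φ 0) :
    p * deriv ψ (β * p) * ψ (β * q) < q * deriv ψ (β * q) * ψ (β * p) := by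
  have hp : 0 < p := hq.trans hqp
  have hβ0 : 0 < β / 2 := by linarith
  have hab : β / 2 < β := by linarith
  -- domain facts on the interval
  have hmemp : ∀ t ∈ Icc (β/2) β, 0 < t * p ∧ t * p < deriv φ 0 := by
    intro t ht
    refine ⟨mul_pos (lt_of_lt_of_le hβ0 ht.1) hp, ?_⟩
    calc t * p ≤ β * p := mul_le_mul_of_nonneg_right ht.2 hp.le
    _ < deriv φ 0 := hdom
  have hmemq : ∀ t ∈ Icc (β/2) β, 0 < t * q ∧ t * q < deriv φ 0 := by
    intro t ht
    refine ⟨mul_pos (lt_of_lt_of_le hβ0 ht.1) hq, ?_⟩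
    have h1 : t * q ≤ β * q := mul_le_mul_of_nonneg_right ht.2 hq.le
    have h2 : β * q < β * p := by nlinarith
    linarith
  have hder : ∀ r t : ℝ, 0 < t * r → t * r < deriv φ 0 →
      HasDerivAt (fun s => ψ (s * r)) (deriv ψ (t * r) * r) t := by
    intro r t h1 h2
    have hd : DifferentiableAt ℝ ψ (t * r) :=
      differentiableAt_of_deriv_ne_zero (hψ' _ h1 h2).ne
    exact hd.hasDerivAt.comp t (hasDerivAt_mul_const r)
  have hderp : ∀ t ∈ Icc (β/2) β, HasDerivAt (fun s => ψ (s * p)) (deriv ψ (t * p) * p) t :=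
    fun t ht => hder p t (hmemp t ht).1 (hmemp t ht).2
  have hderq : ∀ t ∈ Icc (β/2) β, HasDerivAt (fun s => ψ (s * q)) (deriv ψ (t * q) * q) t :=
    fun t ht => hder q t (hmemq t ht).1 (hmemq t ht).2
  have hfc : ContinuousOn (fun s => ψ (s * p)) (Icc (β/2) β) :=
    fun t ht => (hderp t ht).continuousAt.continuousWithinAt
  have hgc : ContinuousOn (fun s => ψ (s * q)) (Icc (β/2) β) :=
    fun t ht => (hderq t ht).continuousAt.continuousWithinAt
  -- Cauchy MVT
  obtain ⟨c, hc, hcm⟩ := exists_ratio_hasDerivAt_eq_ratio_slope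
    (fun s => ψ (s * p)) (fun t => deriv ψ (t * p) * p) hab hfc
    (fun x hx => hderp x (Ioo_subset_Icc_self hx))
    (fun s => ψ (s * q)) (fun t => deriv ψ (t * q) * q) hgc
    (fun x hx => hderq x (Ioo_subset_Icc_self hx))
  -- abbreviations
  have hmem0 : β / 2 ∈ Icc (β/2) β := left_mem_Icc.2 hab.le
  have hmem1 : β ∈ Icc (β/2) β := right_mem_Icc.2 hab.le
  have ha1 : 0 < ψ (β * p) := aux_psi_pos φ ψ hψ (hmemp β hmem1).1 (hmemp β hmem1).2
  have hb1 : 0 < ψ (β * q) := aux_psi_pos φ ψ hψ (hmemq β hmem1).1 (hmemq β hmem1).2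
  have ha0 : 0 < ψ (β/2 * p) := aux_psi_pos φ ψ hψ (hmemp _ hmem0).1 (hmemp _ hmem0).2
  have hb0 : 0 < ψ (β/2 * q) := aux_psi_pos φ ψ hψ (hmemq _ hmem0).1 (hmemq _ hmem0).2
  have hF : deriv ψ (β * p) < 0 := hψ' _ (hmemp β hmem1).1 (hmemp β hmem1).2
  have hG : deriv ψ (β * q) < 0 := hψ' _ (hmemq β hmem1).1 (hmemq β hmem1).2
  have hcIcc : c ∈ Icc (β/2) β := Ioo_subset_Icc_self hc
  have hFc : deriv ψ (c * p) < 0 := hψ' _ (hmemp c hcIcc).1 (hmemp c hcIcc).2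
  have hGc : deriv ψ (c * q) < 0 := hψ' _ (hmemq c hcIcc).1 (hmemq c hcIcc).2
  -- g strictly decreasing : b1 < b0
  have hanti : StrictAntiOn (fun s => ψ (s * q)) (Icc (β/2) β) := by
    apply strictAntiOn_of_deriv_neg (convex_Icc _ _) hgc
    intro x hx
    rw [interior_Icc] at hx
    rw [(hderq x (Ioo_subset_Icc_self hx)).deriv]
    exact mul_neg_of_neg_of_pos
      (hψ' _ (hmemq x (Ioo_subset_Icc_self hx)).1 (hmemq x (Ioo_subset_Icc_self hx)).2) hq
  have hb01 : ψ (β * q) < ψ (β/2 * q) := hanti hmem0 hmem1 hab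
  -- A4
  have hβmem : β ∈ Ioo (0:ℝ) (deriv φ 0 / p) := ⟨hβ, (lt_div_iff₀ hp).2 hdom⟩
  have hβ0mem : β / 2 ∈ Ioo (0:ℝ) (deriv φ 0 / p) := ⟨hβ0, lt_trans hab hβmem.2⟩
  have ha4 := hA4 p q hq hqp hβ0mem hβmem hab
  simp only at ha4
  have e1 : ψ (β * p) * ψ (β/2 * q) < ψ (β/2 * p) * ψ (β * q) :=
    (div_lt_div_iff₀ hb1 hb0).mp ha4
  -- A2
  have hcmem : c ∈ Ioo (0:ℝ) (deriv φ 0 / p) := ⟨lt_trans hβ0 hc.1, lt_trans hc.2 hβmem.2⟩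
  have ha2 := hA2 p q hq hqp hcmem hβmem hc.2
  simp only at ha2
  have ha2' : (-(deriv ψ (c * p))) / (-(deriv ψ (c * q)))
      < (-(deriv ψ (β * p))) / (-(deriv ψ (β * q))) := by
    rw [neg_div_neg_eq, neg_div_neg_eq]; exact ha2
  have e2' := (div_lt_div_iff₀ (neg_pos.2 hGc) (neg_pos.2 hG)).mp ha2'
  have e2 : deriv ψ (c * p) * deriv ψ (β * q) < deriv ψ (β * p) * deriv ψ (c * q) := by
    nlinarith [e2']
  -- algebra
  set a0 := ψ (β/2 * p)
  set a1 := ψ (β * p)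
  set b0 := ψ (β/2 * q)
  set b1 := ψ (β * q)
  set F := deriv ψ (β * p)
  set G := deriv ψ (β * q)
  set Fc := deriv ψ (c * p)
  set Gc := deriv ψ (c * q)
  -- hcm : (b1 - b0) * (Fc * p) = (a1 - a0) * (Gc * q)
  have hS : 0 < b0 - b1 := by linarith
  have step2 : a1 * (b0 - b1) < (a0 - a1) * b1 := by nlinarith [e1]
  have step3 : (a0 - a1) * b1 * (Gc * q) < a1 * (b0 - b1) * (Gc * q) :=
    mul_lt_mul_of_neg_right step2 (mul_neg_of_neg_of_pos hGc hq)
  have e3' : (b0 - b1) * (Fc * p) = (a0 - a1) * (Gc * q) := by linear_combination -hcm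
  have h'' : (b0 - b1) * (p * Fc * b1) = (a0 - a1) * b1 * (Gc * q) := by
    linear_combination b1 * e3'
  have h2 : (b0 - b1) * (p * Fc * b1) < (b0 - b1) * (q * Gc * a1) := by
    have hr : a1 * (b0 - b1) * (Gc * q) = (b0 - b1) * (q * Gc * a1) := by ring
    rw [h'', ← hr]; exact step3
  have star1 : p * Fc * b1 < q * Gc * a1 := lt_of_mul_lt_mul_left h2 hS.le
  have step4 : q * Gc * a1 * G < p * Fc * b1 * G := mul_lt_mul_of_neg_right star1 hG
  have step5 : p * b1 * (Fc * G) < p * b1 * (F * Gc) :=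
    mul_lt_mul_of_pos_left e2 (mul_pos hp hb1)
  have stepA : q * G * a1 * Gc < p * F * b1 * Gc := by linarith [step4, step5]
  have hX : (p * F * b1) * (-Gc) < (q * G * a1) * (-Gc) := by linarith [stepA]
  exact lt_of_mul_lt_mul_right hX (neg_pos.2 hGc).le

open scoped BigOperators

/-- Under (A1), (A2), (A4) and `ψ(y) → ∞` as `y → 0⁺`, with
`q₃ > q₁ > q₂ > 0` and `0 < β₂ < β₁`, `β₁ qⱼ < φ'(0)`:
(i) `x₂ > x₁ > x₃ > 0`, (ii) `z₃ > z₁ > z₂`, (iii) `y₃ > y₁ > y₂`,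
(iv) `z₁/x₁ > z₂/x₂`. -/
theorem stmt_16 (φ ψ : ℝ → ℝ)
    (hφC : ContDiff ℝ 2 φ)
    (hodd : ∀ x : ℝ, φ (-x) = -φ x)
    (hφ' : ∀ x : ℝ, 0 < deriv φ x)
    (hφ'' : ∀ x : ℝ, x ≠ 0 → x * deriv (deriv φ) x < 0)
    (hlim : ∃ L : ℝ, Filter.Tendsto φ Filter.atTop (nhds L))
    (hψ : ∀ y : ℝ, 0 < y → y ≤ deriv φ 0 → 0 ≤ ψ y ∧ deriv φ (ψ y) = y)
    (hψinv : ∀ x : ℝ, 0 ≤ x → ψ (deriv φ x) = x)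
    (hψ' : ∀ y : ℝ, 0 < y → y < deriv φ 0 → deriv ψ y < 0)
    (hψtop : Filter.Tendsto ψ (nhdsWithin 0 (Set.Ioi 0)) Filter.atTop)
    (hA2 : ∀ p q : ℝ, 0 < q → q < p →
      StrictMonoOn (fun β => deriv ψ (β * p) / deriv ψ (β * q))
        (Set.Ioo 0 (deriv φ 0 / p)))
    (hA4 : ∀ p q : ℝ, 0 < q → q < p →
      StrictAntiOn (fun β => ψ (β * p) / ψ (β * q))
        (Set.Ioo 0 (deriv φ 0 / p)))
    (q₁ q₂ q₃ β₁ β₂ : ℝ)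
    (hq2 : 0 < q₂) (hq21 : q₂ < q₁) (hq13 : q₁ < q₃)
    (hβ2 : 0 < β₂) (hβ21 : β₂ < β₁)
    (hdom1 : β₁ * q₁ < deriv φ 0) (hdom2 : β₁ * q₂ < deriv φ 0)
    (hdom3 : β₁ * q₃ < deriv φ 0)
    (x₁ x₂ x₃ y₁ y₂ y₃ z₁ z₂ z₃ : ℝ)
    (hx₁ : x₁ = (q₁ * deriv ψ (β₂ * q₁)) / (q₁ * deriv ψ (β₁ * q₁)))
    (hx₂ : x₂ = (q₂ * deriv ψ (β₂ * q₂)) / (q₂ * deriv ψ (β₁ * q₂)))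
    (hx₃ : x₃ = (q₃ * deriv ψ (β₂ * q₃)) / (q₃ * deriv ψ (β₁ * q₃)))
    (hy₁ : y₁ = ψ (β₂ * q₁) / (q₁ * deriv ψ (β₂ * q₁)))
    (hy₂ : y₂ = ψ (β₂ * q₂) / (q₂ * deriv ψ (β₂ * q₂)))
    (hy₃ : y₃ = ψ (β₂ * q₃) / (q₃ * deriv ψ (β₂ * q₃)))
    (hz₁ : z₁ = ψ (β₁ * q₁) / (q₁ * deriv ψ (β₁ * q₁)))
    (hz₂ : z₂ = ψ (β₁ * q₂) / (q₂ * deriv ψ (β₁ * q₂)))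
    (hz₃ : z₃ = ψ (β₁ * q₃) / (q₃ * deriv ψ (β₁ * q₃))) :
    (0 < x₃ ∧ x₃ < x₁ ∧ x₁ < x₂) ∧ (z₂ < z₁ ∧ z₁ < z₃) ∧
      (y₂ < y₁ ∧ y₁ < y₃) ∧ z₂ / x₂ < z₁ / x₁ := by
  have hq1 : 0 < q₁ := hq2.trans hq21
  have hq3 : 0 < q₃ := hq1.trans hq13
  have hβ1 : 0 < β₂ := hβ2
  have hb1 : 0 < β₁ := hβ2.trans hβ21
  have hdom2' : ∀ r : ℝ, 0 < r → β₁ * r < deriv φ 0 → β₂ * r < deriv φ 0 := by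
    intro r hr hd
    have : β₂ * r < β₁ * r := mul_lt_mul_of_pos_right hβ21 hr
    linarith
  -- sign facts at the six points
  have fact : ∀ b r : ℝ, 0 < b → 0 < r → b * r < deriv φ 0 →
      0 < ψ (b * r) ∧ deriv ψ (b * r) < 0 := by
    intro b r hb hr hd
    have h1 : 0 < b * r := mul_pos hb hr
    exact ⟨aux_psi_pos φ ψ hψ h1 hd, hψ' _ h1 hd⟩
  obtain ⟨P11, D11⟩ := fact β₁ q₁ hb1 hq1 hdom1
  obtain ⟨P12, D12⟩ := fact β₁ q₂ hb1 hq2 hdom2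
  obtain ⟨P13, D13⟩ := fact β₁ q₃ hb1 hq3 hdom3
  obtain ⟨P21, D21⟩ := fact β₂ q₁ hβ2 hq1 (hdom2' q₁ hq1 hdom1)
  obtain ⟨P22, D22⟩ := fact β₂ q₂ hβ2 hq2 (hdom2' q₂ hq2 hdom2)
  obtain ⟨P23, D23⟩ := fact β₂ q₃ hβ2 hq3 (hdom2' q₃ hq3 hdom3)
  -- part (i): x ordering
  have xlem : ∀ p q : ℝ, 0 < q → q < p → β₁ * p < deriv φ 0 →
      deriv ψ (β₂ * p) / deriv ψ (β₁ * p) < deriv ψ (β₂ * q) / deriv ψ (β₁ * q) := by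
    intro p q hq hqp hd
    have hp : 0 < p := hq.trans hqp
    have hmem1 : β₁ ∈ Ioo (0:ℝ) (deriv φ 0 / p) := ⟨hb1, (lt_div_iff₀ hp).2 hd⟩
    have hmem2 : β₂ ∈ Ioo (0:ℝ) (deriv φ 0 / p) := ⟨hβ2, lt_trans hβ21 hmem1.2⟩
    have ha2 := hA2 p q hq hqp hmem2 hmem1 hβ21
    simp only at ha2
    have hqlt : β₁ * q < deriv φ 0 := by
      have : β₁ * q < β₁ * p := mul_lt_mul_of_pos_left hqp hb1
      linarith
    obtain ⟨_, hu⟩ := fact β₂ p hβ2 hp (hdom2' p hp hd)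
    obtain ⟨_, hv⟩ := fact β₂ q hβ2 hq (hdom2' q hq hqlt)
    obtain ⟨_, hs⟩ := fact β₁ p hb1 hp hd
    obtain ⟨_, ht⟩ := fact β₁ q hb1 hq hqlt
    have ha2' : (-(deriv ψ (β₂ * p))) / (-(deriv ψ (β₂ * q)))
        < (-(deriv ψ (β₁ * p))) / (-(deriv ψ (β₁ * q))) := by
      rw [neg_div_neg_eq, neg_div_neg_eq]; exact ha2
    have hprod := (div_lt_div_iff₀ (neg_pos.2 hv) (neg_pos.2 ht)).mp ha2'
    exact aux_div_lt_div_of_neg hs ht (by linarith [hprod])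
  have hx12 : x₁ < x₂ := by
    rw [hx₁, hx₂, mul_div_mul_left _ _ hq1.ne', mul_div_mul_left _ _ hq2.ne']
    exact xlem q₁ q₂ hq2 hq21 hdom1
  have hx31 : x₃ < x₁ := by
    rw [hx₁, hx₃, mul_div_mul_left _ _ hq1.ne', mul_div_mul_left _ _ hq3.ne']
    exact xlem q₃ q₁ hq1 hq13 hdom3
  have hx3pos : 0 < x₃ := by
    rw [hx₃]
    exact div_pos_iff.mpr (Or.inr ⟨mul_neg_of_pos_of_neg hq3 D23, mul_neg_of_pos_of_neg hq3 D13⟩)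
  -- star applications
  have s11 : q₁ * deriv ψ (β₁ * q₁) * ψ (β₁ * q₂) < q₂ * deriv ψ (β₁ * q₂) * ψ (β₁ * q₁) :=
    aux_star φ ψ hψ hψ' hA2 hA4 q₁ q₂ β₁ hq2 hq21 hb1 hdom1
  have s13 : q₃ * deriv ψ (β₁ * q₃) * ψ (β₁ * q₁) < q₁ * deriv ψ (β₁ * q₁) * ψ (β₁ * q₃) :=
    aux_star φ ψ hψ hψ' hA2 hA4 q₃ q₁ β₁ hq1 hq13 hb1 hdom3
  have s21 : q₁ * deriv ψ (β₂ * q₁) * ψ (β₂ * q₂) < q₂ * deriv ψ (β₂ * q₂) * ψ (β₂ * q₁) :=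
    aux_star φ ψ hψ hψ' hA2 hA4 q₁ q₂ β₂ hq2 hq21 hβ2 (hdom2' q₁ hq1 hdom1)
  have s23 : q₃ * deriv ψ (β₂ * q₃) * ψ (β₂ * q₁) < q₁ * deriv ψ (β₂ * q₁) * ψ (β₂ * q₃) :=
    aux_star φ ψ hψ hψ' hA2 hA4 q₃ q₁ β₂ hq1 hq13 hβ2 (hdom2' q₃ hq3 hdom3)
  -- part (ii)
  have hz21 : z₂ < z₁ := by
    rw [hz₂, hz₁]
    exact aux_div_lt_div_of_neg (mul_neg_of_pos_of_neg hq2 D12)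
      (mul_neg_of_pos_of_neg hq1 D11) (by linarith [s11])
  have hz13 : z₁ < z₃ := by
    rw [hz₁, hz₃]
    exact aux_div_lt_div_of_neg (mul_neg_of_pos_of_neg hq1 D11)
      (mul_neg_of_pos_of_neg hq3 D13) (by linarith [s13])
  -- part (iii)
  have hy21 : y₂ < y₁ := by
    rw [hy₂, hy₁]
    exact aux_div_lt_div_of_neg (mul_neg_of_pos_of_neg hq2 D22)
      (mul_neg_of_pos_of_neg hq1 D21) (by linarith [s21])
  have hy13 : y₁ < y₃ := by
    rw [hy₁, hy₃]
    exact aux_div_lt_div_of_neg (mul_neg_of_pos_of_neg hq1 D21)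
      (mul_neg_of_pos_of_neg hq3 D23) (by linarith [s23])
  -- part (iv)
  have hzx1 : z₁ / x₁ = ψ (β₁ * q₁) / (q₁ * deriv ψ (β₂ * q₁)) := by
    rw [hz₁, hx₁, aux_div_div _ _ _ (mul_neg_of_pos_of_neg hq1 D11).ne]
  have hzx2 : z₂ / x₂ = ψ (β₁ * q₂) / (q₂ * deriv ψ (β₂ * q₂)) := by
    rw [hz₂, hx₂, aux_div_div _ _ _ (mul_neg_of_pos_of_neg hq2 D12).ne]
  have hiv : z₂ / x₂ < z₁ / x₁ := by
    rw [hzx1, hzx2]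
    apply aux_div_lt_div_of_neg (mul_neg_of_pos_of_neg hq2 D22)
      (mul_neg_of_pos_of_neg hq1 D21)
    -- need : ψ (β₁ q₂) * (q₁ * dψ(β₂ q₁)) < ψ (β₁ q₁) * (q₂ * dψ(β₂ q₂))
    have hmem1 : β₁ ∈ Ioo (0:ℝ) (deriv φ 0 / q₁) := ⟨hb1, (lt_div_iff₀ hq1).2 hdom1⟩
    have hmem2 : β₂ ∈ Ioo (0:ℝ) (deriv φ 0 / q₁) := ⟨hβ2, lt_trans hβ21 hmem1.2⟩
    have ha4 := hA4 q₁ q₂ hq2 hq21 hmem2 hmem1 hβ21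
    simp only at ha4
    have a4p : ψ (β₁ * q₁) * ψ (β₂ * q₂) < ψ (β₂ * q₁) * ψ (β₁ * q₂) :=
      (div_lt_div_iff₀ P12 P22).mp ha4
    have h1 : q₁ * deriv ψ (β₂ * q₁) * ψ (β₂ * q₂) * ψ (β₁ * q₂)
        < q₂ * deriv ψ (β₂ * q₂) * ψ (β₂ * q₁) * ψ (β₁ * q₂) :=
      mul_lt_mul_of_pos_right s21 P12
    have h2 : ψ (β₂ * q₁) * ψ (β₁ * q₂) * (q₂ * deriv ψ (β₂ * q₂))
        < ψ (β₁ * q₁) * ψ (β₂ * q₂) * (q₂ * deriv ψ (β₂ * q₂)) :=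
      mul_lt_mul_of_neg_right a4p (mul_neg_of_pos_of_neg hq2 D22)
    have hfin : (ψ (β₁ * q₂) * (q₁ * deriv ψ (β₂ * q₁))) * ψ (β₂ * q₂)
        < (ψ (β₁ * q₁) * (q₂ * deriv ψ (β₂ * q₂))) * ψ (β₂ * q₂) := by
      linarith [h1, h2]
    exact lt_of_mul_lt_mul_right hfin P22.le
  exact ⟨⟨hx3pos, hx31, hx12⟩, ⟨hz21, hz13⟩, ⟨hy21, hy13⟩, hiv⟩
end

section
/- Let q₃ > q₁ > q₂ > 0 and 0 < β₂ < β₁ with β₁·q_j < φ'(0) for j = 1,2,3. Then E > 0, where E = x₃(z₁ − z₂) + x₁x₃(y₁ − y₂) + x₂(z₁ − z₃) + x₁x₂(y₁ − y₃) + x₁(z₃ − z₂) + (y₃ − y₂)(x₁x₂ + x₂x₃ − x₁x₃). -/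
open scoped BigOperators

set_option maxHeartbeats 1600000

/-- If `f` is antitone on an open set containing `x` and has derivative `d` at `x`,
then `d ≤ 0`. -/
lemma stmt17_deriv_nonpos {f : ℝ → ℝ} {s : Set ℝ} {x d : ℝ}
    (hs : IsOpen s) (hx : x ∈ s) (hf : AntitoneOn f s) (hd : HasDerivAt f d x) :
    d ≤ 0 := by
  have h := hd.hasDerivWithinAt (s := Set.Ioi x)
  rw [hasDerivWithinAt_iff_tendsto_slope] at h
  have hset : Set.Ioi x \ {x} = Set.Ioi x := by
    apply Set.diff_singleton_eq_self; simp
  rw [hset] at h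
  refine le_of_tendsto h ?_
  filter_upwards [self_mem_nhdsWithin,
    mem_nhdsWithin_of_mem_nhds (hs.mem_nhds hx)] with y hy hys
  have hxy : x < y := hy
  rw [slope_def_field]
  apply div_nonpos_of_nonpos_of_nonneg
  · have := hf hx hys hxy.le
    linarith
  · linarith

/-- Core algebraic inequality. -/
lemma stmt17_master (a₁ a₂ a₃ b₁ b₂ b₃ u₁ u₂ u₃ v₁ v₂ v₃ : ℝ)
    (ha₁ : 0 < a₁) (ha₂ : 0 < a₂) (ha₃ : 0 < a₃)
    (hb₁ : 0 < b₁) (hb₂ : 0 < b₂) (hb₃ : 0 < b₃)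
    (hu₁ : u₁ < 0) (hu₂ : u₂ < 0) (hu₃ : u₃ < 0)
    (hv₁ : v₁ < 0) (hv₂ : v₂ < 0) (hv₃ : v₃ < 0)
    (h2 : v₁ * b₂ ≤ b₁ * v₂)
    (h3 : u₁ * a₂ ≤ a₁ * u₂)
    (h6 : v₃ * b₁ ≤ b₃ * v₁)
    (h4 : a₁ * b₂ < b₁ * a₂)
    (h5 : v₁ * u₂ < v₂ * u₁) :
    0 < v₃ / u₃ * (a₁ / u₁ - a₂ / u₂) + v₁ / u₁ * (v₃ / u₃) * (b₁ / v₁ - b₂ / v₂) +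
      v₂ / u₂ * (a₁ / u₁ - a₃ / u₃) + v₁ / u₁ * (v₂ / u₂) * (b₁ / v₁ - b₃ / v₃) +
      v₁ / u₁ * (a₃ / u₃ - a₂ / u₂) +
      (b₃ / v₃ - b₂ / v₂) * (v₁ / u₁ * (v₂ / u₂) + v₂ / u₂ * (v₃ / u₃) - v₁ / u₁ * (v₃ / u₃)) := by
  -- step 1: v₂ * a₁ - v₁ * a₂ > 0
  have s1 : 0 < v₂ * a₁ - v₁ * a₂ := by
    have h1 : 0 ≤ a₂ * (b₁ * v₂ - v₁ * b₂) := mul_nonneg ha₂.le (by linarith)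
    have hh : 0 < v₂ * (a₁ * b₂ - b₁ * a₂) := mul_pos_of_neg_of_neg hv₂ (by linarith)
    have hb : 0 < b₂ * (v₂ * a₁ - v₁ * a₂) := by nlinarith
    by_contra hcon
    push_neg at hcon
    nlinarith [mul_nonpos_of_nonneg_of_nonpos hb₂.le hcon]
  -- step 2
  have s2 : v₃ * b₁ - v₁ * b₃ + v₁ * a₃ < 0 := by
    nlinarith [mul_neg_of_neg_of_pos hv₁ ha₃]
  -- the key polynomial inequality
  have hF : 0 < (a₂ + b₂) * (v₁ * u₃ + v₃ * u₁) - (a₁ + b₁) * (v₂ * u₃ + v₃ * u₂) +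
      (b₃ - a₃) * (v₁ * u₂ - v₂ * u₁) := by
    have t1 : 0 ≤ v₁ * u₃ * (b₁ * v₂ - v₁ * b₂) :=
      mul_nonneg (mul_pos_of_neg_of_neg hv₁ hu₃).le (by linarith)
    have t2 : 0 ≤ v₁ * v₃ * (a₁ * u₂ - u₁ * a₂) :=
      mul_nonneg (mul_pos_of_neg_of_neg hv₁ hv₃).le (by linarith)
    have t3 : 0 < u₃ * v₁ * (v₂ * a₁ - v₁ * a₂) :=
      mul_pos (mul_pos_of_neg_of_neg hu₃ hv₁) s1
    have t4 : 0 ≤ v₃ * u₁ * (b₁ * v₂ - v₁ * b₂) :=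
      mul_nonneg (mul_pos_of_neg_of_neg hv₃ hu₁).le (by linarith)
    have t5 : 0 < (-(v₃ * b₁ - v₁ * b₃ + v₁ * a₃)) * (v₂ * u₁ - v₁ * u₂) :=
      mul_pos (by linarith) (by linarith)
    have hid : ((a₂ + b₂) * (v₁ * u₃ + v₃ * u₁) - (a₁ + b₁) * (v₂ * u₃ + v₃ * u₂) +
        (b₃ - a₃) * (v₁ * u₂ - v₂ * u₁)) * (-v₁) =
        v₁ * u₃ * (b₁ * v₂ - v₁ * b₂) + v₁ * v₃ * (a₁ * u₂ - u₁ * a₂) +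
        u₃ * v₁ * (v₂ * a₁ - v₁ * a₂) + v₃ * u₁ * (b₁ * v₂ - v₁ * b₂) +
        (-(v₃ * b₁ - v₁ * b₃ + v₁ * a₃)) * (v₂ * u₁ - v₁ * u₂) := by ring
    have hpos : 0 < ((a₂ + b₂) * (v₁ * u₃ + v₃ * u₁) - (a₁ + b₁) * (v₂ * u₃ + v₃ * u₂) +
        (b₃ - a₃) * (v₁ * u₂ - v₂ * u₁)) * (-v₁) := by
      rw [hid]; linarith
    by_contra hcon
    push_neg at hcon
    nlinarith [mul_nonpos_of_nonpos_of_nonneg hcon (by linarith : (0:ℝ) ≤ -v₁)]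
  have hprod : 0 < -(u₁ * u₂ * u₃) := by
    have := mul_neg_of_pos_of_neg (mul_pos_of_neg_of_neg hu₁ hu₂) hu₃
    linarith
  have heq : v₃ / u₃ * (a₁ / u₁ - a₂ / u₂) + v₁ / u₁ * (v₃ / u₃) * (b₁ / v₁ - b₂ / v₂) +
      v₂ / u₂ * (a₁ / u₁ - a₃ / u₃) + v₁ / u₁ * (v₂ / u₂) * (b₁ / v₁ - b₃ / v₃) +
      v₁ / u₁ * (a₃ / u₃ - a₂ / u₂) +
      (b₃ / v₃ - b₂ / v₂) * (v₁ / u₁ * (v₂ / u₂) + v₂ / u₂ * (v₃ / u₃) - v₁ / u₁ * (v₃ / u₃)) =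
      ((a₂ + b₂) * (v₁ * u₃ + v₃ * u₁) - (a₁ + b₁) * (v₂ * u₃ + v₃ * u₂) +
        (b₃ - a₃) * (v₁ * u₂ - v₂ * u₁)) / (-(u₁ * u₂ * u₃)) := by
    have hu₁' : u₁ ≠ 0 := hu₁.ne
    have hu₂' : u₂ ≠ 0 := hu₂.ne
    have hu₃' : u₃ ≠ 0 := hu₃.ne
    have hv₁' : v₁ ≠ 0 := hv₁.ne
    have hv₂' : v₂ ≠ 0 := hv₂.ne
    have hv₃' : v₃ ≠ 0 := hv₃.ne
    field_simp
    ring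
  rw [heq]
  exact div_pos hF hprod

/-- Under (A1), (A2), (A4) and `ψ(y) → ∞` as `y → 0⁺`, with
`q₃ > q₁ > q₂ > 0` and `0 < β₂ < β₁`, `β₁ qⱼ < φ'(0)`, the expression
`E = x₃(z₁−z₂) + x₁x₃(y₁−y₂) + x₂(z₁−z₃) + x₁x₂(y₁−y₃) + x₁(z₃−z₂)
+ (y₃−y₂)(x₁x₂ + x₂x₃ − x₁x₃)` is positive. -/
theorem stmt_17 (φ ψ : ℝ → ℝ)
    (hφC : ContDiff ℝ 2 φ)
    (hodd : ∀ x : ℝ, φ (-x) = -φ x)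
    (hφ' : ∀ x : ℝ, 0 < deriv φ x)
    (hφ'' : ∀ x : ℝ, x ≠ 0 → x * deriv (deriv φ) x < 0)
    (hlim : ∃ L : ℝ, Filter.Tendsto φ Filter.atTop (nhds L))
    (hψ : ∀ y : ℝ, 0 < y → y ≤ deriv φ 0 → 0 ≤ ψ y ∧ deriv φ (ψ y) = y)
    (hψinv : ∀ x : ℝ, 0 ≤ x → ψ (deriv φ x) = x)
    (hψ' : ∀ y : ℝ, 0 < y → y < deriv φ 0 → deriv ψ y < 0)
    (hψtop : Filter.Tendsto ψ (nhdsWithin 0 (Set.Ioi 0)) Filter.atTop)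
    (hA2 : ∀ p q : ℝ, 0 < q → q < p →
      StrictMonoOn (fun β => deriv ψ (β * p) / deriv ψ (β * q))
        (Set.Ioo 0 (deriv φ 0 / p)))
    (hA4 : ∀ p q : ℝ, 0 < q → q < p →
      StrictAntiOn (fun β => ψ (β * p) / ψ (β * q))
        (Set.Ioo 0 (deriv φ 0 / p)))
    (q₁ q₂ q₃ β₁ β₂ : ℝ)
    (hq2 : 0 < q₂) (hq21 : q₂ < q₁) (hq13 : q₁ < q₃)
    (hβ2 : 0 < β₂) (hβ21 : β₂ < β₁)
    (hdom1 : β₁ * q₁ < deriv φ 0) (hdom2 : β₁ * q₂ < deriv φ 0)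
    (hdom3 : β₁ * q₃ < deriv φ 0)
    (x₁ x₂ x₃ y₁ y₂ y₃ z₁ z₂ z₃ : ℝ)
    (hx₁ : x₁ = (q₁ * deriv ψ (β₂ * q₁)) / (q₁ * deriv ψ (β₁ * q₁)))
    (hx₂ : x₂ = (q₂ * deriv ψ (β₂ * q₂)) / (q₂ * deriv ψ (β₁ * q₂)))
    (hx₃ : x₃ = (q₃ * deriv ψ (β₂ * q₃)) / (q₃ * deriv ψ (β₁ * q₃)))
    (hy₁ : y₁ = ψ (β₂ * q₁) / (q₁ * deriv ψ (β₂ * q₁)))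
    (hy₂ : y₂ = ψ (β₂ * q₂) / (q₂ * deriv ψ (β₂ * q₂)))
    (hy₃ : y₃ = ψ (β₂ * q₃) / (q₃ * deriv ψ (β₂ * q₃)))
    (hz₁ : z₁ = ψ (β₁ * q₁) / (q₁ * deriv ψ (β₁ * q₁)))
    (hz₂ : z₂ = ψ (β₁ * q₂) / (q₂ * deriv ψ (β₁ * q₂)))
    (hz₃ : z₃ = ψ (β₁ * q₃) / (q₃ * deriv ψ (β₁ * q₃))) :
    0 < x₃ * (z₁ - z₂) + x₁ * x₃ * (y₁ - y₂) + x₂ * (z₁ - z₃) +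
      x₁ * x₂ * (y₁ - y₃) + x₁ * (z₃ - z₂) +
      (y₃ - y₂) * (x₁ * x₂ + x₂ * x₃ - x₁ * x₃) := by
  subst hx₁ hx₂ hx₃ hy₁ hy₂ hy₃ hz₁ hz₂ hz₃
  have hq1 : 0 < q₁ := hq2.trans hq21
  have hq3 : 0 < q₃ := hq1.trans hq13
  have hβ1 : 0 < β₁ := hβ2.trans hβ21
  -- domain facts
  have hd21 : β₂ * q₁ < β₁ * q₁ := mul_lt_mul_of_pos_right hβ21 hq1
  have hd22 : β₂ * q₂ < β₁ * q₂ := mul_lt_mul_of_pos_right hβ21 hq2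
  have hd23 : β₂ * q₃ < β₁ * q₃ := mul_lt_mul_of_pos_right hβ21 hq3
  have hD21 : β₂ * q₁ < deriv φ 0 := hd21.trans hdom1
  have hD22 : β₂ * q₂ < deriv φ 0 := hd22.trans hdom2
  have hD23 : β₂ * q₃ < deriv φ 0 := hd23.trans hdom3
  have hp11 : 0 < β₁ * q₁ := mul_pos hβ1 hq1
  have hp12 : 0 < β₁ * q₂ := mul_pos hβ1 hq2
  have hp13 : 0 < β₁ * q₃ := mul_pos hβ1 hq3
  have hp21 : 0 < β₂ * q₁ := mul_pos hβ2 hq1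
  have hp22 : 0 < β₂ * q₂ := mul_pos hβ2 hq2
  have hp23 : 0 < β₂ * q₃ := mul_pos hβ2 hq3
  -- ψ is positive on (0, deriv φ 0)
  have hpos : ∀ y : ℝ, 0 < y → y < deriv φ 0 → 0 < ψ y := by
    intro y h1 h2
    obtain ⟨h0, heq⟩ := hψ y h1 h2.le
    rcases h0.lt_or_eq with h | h
    · exact h
    · exfalso; rw [← h] at heq; exact absurd heq (by linarith [h2])
  -- ψ is differentiable where its derivative is known to be negative
  have hdiff : ∀ y : ℝ, 0 < y → y < deriv φ 0 → DifferentiableAt ℝ ψ y := by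
    intro y h1 h2
    by_contra h
    have hneg := hψ' y h1 h2
    rw [deriv_zero_of_not_differentiableAt h] at hneg
    exact lt_irrefl 0 hneg
  -- key derivative inequality
  have key : ∀ p q β : ℝ, 0 < q → q < p → 0 < β → β * p < deriv φ 0 →
      deriv ψ (β * p) * p * ψ (β * q) - ψ (β * p) * (deriv ψ (β * q) * q) ≤ 0 := by
    intro p q β hq hqp hβ hβp
    have hp : 0 < p := hq.trans hqp
    have hβq : β * q < β * p := mul_lt_mul_of_pos_left hqp hβ
    have h0q : 0 < β * q := mul_pos hβ hq
    have h0p : 0 < β * p := mul_pos hβ hp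
    have hqD : β * q < deriv φ 0 := hβq.trans hβp
    have hb : ψ (β * q) ≠ 0 := (hpos _ h0q hqD).ne'
    have hd1 : HasDerivAt (fun b : ℝ => ψ (b * p)) (deriv ψ (β * p) * p) β := by
      have := HasDerivAt.comp β (hdiff _ h0p hβp).hasDerivAt (hasDerivAt_mul_const p)
      exact this
    have hd2 : HasDerivAt (fun b : ℝ => ψ (b * q)) (deriv ψ (β * q) * q) β := by
      have := HasDerivAt.comp β (hdiff _ h0q hqD).hasDerivAt (hasDerivAt_mul_const q)
      exact this
    have hd : HasDerivAt (fun b : ℝ => ψ (b * p) / ψ (b * q))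
        ((deriv ψ (β * p) * p * ψ (β * q) - ψ (β * p) * (deriv ψ (β * q) * q)) /
          (ψ (β * q)) ^ 2) β := hd1.div hd2 hb
    have hmem : β ∈ Set.Ioo (0 : ℝ) (deriv φ 0 / p) :=
      ⟨hβ, (lt_div_iff₀ hp).2 hβp⟩
    have hle := stmt17_deriv_nonpos isOpen_Ioo hmem ((hA4 p q hq hqp).antitoneOn) hd
    have hsq : 0 < (ψ (β * q)) ^ 2 := by positivity
    by_contra hcon
    push_neg at hcon
    exact absurd (div_pos hcon hsq) (not_lt.2 hle)
  -- instantiate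
  have k2 := key q₁ q₂ β₂ hq2 hq21 hβ2 hD21
  have k3 := key q₁ q₂ β₁ hq2 hq21 hβ1 hdom1
  have k6 := key q₃ q₁ β₂ hq1 hq13 hβ2 hD23
  -- memberships
  have hm2 : β₂ ∈ Set.Ioo (0 : ℝ) (deriv φ 0 / q₁) := ⟨hβ2, (lt_div_iff₀ hq1).2 hD21⟩
  have hm1 : β₁ ∈ Set.Ioo (0 : ℝ) (deriv φ 0 / q₁) := ⟨hβ1, (lt_div_iff₀ hq1).2 hdom1⟩
  -- strict A4 between β₂ and β₁ for pair (q₁, q₂)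
  have h4raw := hA4 q₁ q₂ hq2 hq21 hm2 hm1 hβ21
  have h4 : ψ (β₁ * q₁) * ψ (β₂ * q₂) < ψ (β₂ * q₁) * ψ (β₁ * q₂) :=
    (div_lt_div_iff₀ (hpos _ hp12 hdom2) (hpos _ hp22 hD22)).mp h4raw
  -- strict A2 between β₂ and β₁ for pair (q₁, q₂)
  have h5raw := hA2 q₁ q₂ hq2 hq21 hm2 hm1 hβ21
  have hn11 : deriv ψ (β₁ * q₁) < 0 := hψ' _ hp11 hdom1
  have hn12 : deriv ψ (β₁ * q₂) < 0 := hψ' _ hp12 hdom2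
  have hn13 : deriv ψ (β₁ * q₃) < 0 := hψ' _ hp13 hdom3
  have hn21 : deriv ψ (β₂ * q₁) < 0 := hψ' _ hp21 hD21
  have hn22 : deriv ψ (β₂ * q₂) < 0 := hψ' _ hp22 hD22
  have hn23 : deriv ψ (β₂ * q₃) < 0 := hψ' _ hp23 hD23
  have h5' : (-deriv ψ (β₂ * q₁)) / (-deriv ψ (β₂ * q₂)) <
      (-deriv ψ (β₁ * q₁)) / (-deriv ψ (β₁ * q₂)) := by
    rw [neg_div_neg_eq, neg_div_neg_eq]; exact h5raw
  have h5 : (-deriv ψ (β₂ * q₁)) * (-deriv ψ (β₁ * q₂)) <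
      (-deriv ψ (β₁ * q₁)) * (-deriv ψ (β₂ * q₂)) :=
    (div_lt_div_iff₀ (by linarith) (by linarith)).mp h5'
  -- apply the master algebraic lemma
  exact stmt17_master (ψ (β₁ * q₁)) (ψ (β₁ * q₂)) (ψ (β₁ * q₃))
    (ψ (β₂ * q₁)) (ψ (β₂ * q₂)) (ψ (β₂ * q₃))
    (q₁ * deriv ψ (β₁ * q₁)) (q₂ * deriv ψ (β₁ * q₂)) (q₃ * deriv ψ (β₁ * q₃))
    (q₁ * deriv ψ (β₂ * q₁)) (q₂ * deriv ψ (β₂ * q₂)) (q₃ * deriv ψ (β₂ * q₃))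
    (hpos _ hp11 hdom1) (hpos _ hp12 hdom2) (hpos _ hp13 hdom3)
    (hpos _ hp21 hD21) (hpos _ hp22 hD22) (hpos _ hp23 hD23)
    (mul_neg_of_pos_of_neg hq1 hn11) (mul_neg_of_pos_of_neg hq2 hn12)
    (mul_neg_of_pos_of_neg hq3 hn13)
    (mul_neg_of_pos_of_neg hq1 hn21) (mul_neg_of_pos_of_neg hq2 hn22)
    (mul_neg_of_pos_of_neg hq3 hn23)
    (by nlinarith [k2]) (by nlinarith [k3]) (by nlinarith [k6])
    (by nlinarith [h4]) (by nlinarith [h5, mul_pos hq1 hq2])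
end

section
/- Let n ≥ 3, assume c_j > 0 and l_j > 0 for all j, q_j = l_j/c_j, and the q_j are pairwise distinct. Then f cannot have local maxima on P in two different side orthants: there do not exist points x₀, x₁ ∈ P, both local maxima of f on P, with x₀₁ < 0 and x₀_j > 0 for all j ≥ 2, and with x₁₂ < 0 and x₁_j > 0 for all j ≠ 2. -/
open scoped BigOperators

open Set Filter Topology Finset

/-- derivative of a strictly antitone function on an open interval is nonpositive -/
lemma stmt18_deriv_nonpos_of_strictAntiOn {f : ℝ → ℝ} {f' a b x : ℝ}
    (hx : x ∈ Set.Ioo a b) (hf : HasDerivAt f f' x)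
    (h : StrictAntiOn f (Set.Ioo a b)) : f' ≤ 0 := by
  have hslope := hasDerivAt_iff_tendsto_slope.mp hf
  have hle : Tendsto (slope f x) (𝓝[>] x) (𝓝 f') :=
    hslope.mono_left (nhdsWithin_mono x (fun y hy => ne_of_gt hy))
  refine le_of_tendsto hle ?_
  have hmem : ∀ᶠ y in 𝓝[>] x, y ∈ Set.Ioo a b :=
    eventually_nhdsWithin_of_eventually_nhds (isOpen_Ioo.eventually_mem hx)
  filter_upwards [hmem, self_mem_nhdsWithin] with y hy hxy
  have h1 : f y < f x := h hx hy hxy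
  have h2 : (0:ℝ) < y - x := sub_pos.mpr hxy
  rw [slope_def_field]
  rw [div_nonpos_iff]
  right
  exact ⟨by linarith, by linarith⟩

/-- second derivative at an interior local max is nonpositive -/
lemma stmt18_second_deriv_nonpos {g g1 g2 : ℝ → ℝ}
    (h1 : ∀ t, HasDerivAt g (g1 t) t) (h2 : ∀ t, HasDerivAt g1 (g2 t) t)
    (hc : Continuous g2) (hmax : IsLocalMax g 0) : g2 0 ≤ 0 := by
  by_contra hpos
  push_neg at hpos
  have hg10 : g1 0 = 0 := by
    have := hmax.deriv_eq_zero
    rwa [(h1 0).deriv] at this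
  have hev : ∀ᶠ t in 𝓝 (0:ℝ), 0 < g2 t :=
    hc.continuousAt.eventually (eventually_gt_nhds hpos)
  obtain ⟨δ, hδpos, hδ⟩ := Metric.eventually_nhds_iff.mp hev
  obtain ⟨δ₂, hδ₂pos, hδ₂⟩ := Metric.eventually_nhds_iff.mp hmax
  set r := min δ δ₂ with hr
  have hrpos : 0 < r := lt_min hδpos hδ₂pos
  -- g1 strictly mono on [0, r), hence positive on (0, r)
  have hmono1 : StrictMonoOn g1 (Set.Ico 0 r) := by
    apply strictMonoOn_of_deriv_pos (convex_Ico 0 r)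
    · exact fun t _ => (h2 t).continuousAt.continuousWithinAt
    · intro t ht
      rw [interior_Ico] at ht
      rw [(h2 t).deriv]
      apply hδ
      rw [Real.dist_eq, sub_zero, abs_of_pos ht.1]
      exact lt_of_lt_of_le ht.2 (min_le_left _ _)
  have hg1pos : ∀ t ∈ Set.Ioo 0 r, 0 < g1 t := by
    intro t ht
    have h0m : (0:ℝ) ∈ Set.Ico 0 r := ⟨le_refl 0, hrpos⟩
    have := hmono1 h0m ⟨le_of_lt ht.1, ht.2⟩ ht.1
    rwa [hg10] at this
  have hmono : StrictMonoOn g (Set.Ico 0 r) := by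
    apply strictMonoOn_of_deriv_pos (convex_Ico 0 r)
    · exact fun t _ => (h1 t).continuousAt.continuousWithinAt
    · intro t ht
      rw [interior_Ico] at ht
      rw [(h1 t).deriv]
      exact hg1pos t ht
  have hlt : g 0 < g (r/2) :=
    hmono ⟨le_refl 0, hrpos⟩ ⟨by positivity, by linarith⟩ (by positivity)
  have : g (r/2) ≤ g 0 := by
    apply hδ₂
    rw [Real.dist_eq, sub_zero, abs_of_pos (by positivity)]
    calc r/2 < r := by linarith
    _ ≤ δ₂ := min_le_right _ _
  linarith


lemma stmt18_max_conditions {m : ℕ} {φ : ℝ → ℝ} (hφC : ContDiff ℝ 2 φ)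
    (c y w : Fin m → ℝ)
    (hmax : ∀ᶠ t in 𝓝 (0:ℝ), ∑ j, c j * φ (y j + t * w j) ≤ ∑ j, c j * φ (y j)) :
    (∑ j, c j * (deriv φ (y j) * w j) = 0) ∧
    (∑ j, c j * (deriv (deriv φ) (y j) * w j ^ 2) ≤ 0) := by
  have hφC' : ContDiff ℝ (1+1) φ := by
    convert hφC using 1
    norm_num
  have hφ1 : ContDiff ℝ 1 (deriv φ) := (contDiff_succ_iff_deriv.mp hφC').2.2
  have hdφ : ∀ x, HasDerivAt φ (deriv φ x) x := fun x =>
    (hφC.differentiable (by norm_num)).differentiableAt.hasDerivAt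
  have hdφ' : ∀ x, HasDerivAt (deriv φ) (deriv (deriv φ) x) x := fun x =>
    (hφ1.differentiable one_ne_zero).differentiableAt.hasDerivAt
  have hφ''cont : Continuous (deriv (deriv φ)) := by
    have hφ1' : ContDiff ℝ (0+1) (deriv φ) := by
      convert hφ1 using 1
      norm_num
    exact (contDiff_succ_iff_deriv.mp hφ1').2.2.continuous
  -- inner affine maps
  have hinner : ∀ (j : Fin m) (t : ℝ),
      HasDerivAt (fun s : ℝ => y j + s * w j) (w j) t := by
    intro j t
    simpa using ((hasDerivAt_id t).mul_const (w j)).const_add (y j)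
  set g : ℝ → ℝ := fun t => ∑ j, c j * φ (y j + t * w j) with hg
  set g1 : ℝ → ℝ := fun t => ∑ j, c j * (deriv φ (y j + t * w j) * w j) with hg1
  set g2 : ℝ → ℝ := fun t => ∑ j, c j * (deriv (deriv φ) (y j + t * w j) * w j ^ 2) with hg2
  have hdg : ∀ t, HasDerivAt g (g1 t) t := by
    intro t
    apply HasDerivAt.fun_sum
    intro j _
    exact ((hdφ _).comp t (hinner j t)).const_mul (c j)
  have hdg1 : ∀ t, HasDerivAt g1 (g2 t) t := by
    intro t
    apply HasDerivAt.fun_sum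
    intro j _
    have := (((hdφ' _).comp t (hinner j t)).mul_const (w j)).const_mul (c j)
    exact this.congr_deriv (by ring)
  have hcg2 : Continuous g2 := by
    apply continuous_finset_sum
    intro j _
    apply Continuous.mul continuous_const
    apply Continuous.mul _ continuous_const
    exact hφ''cont.comp (continuous_const.add (continuous_id.mul continuous_const))
  have hlm : IsLocalMax g 0 := by
    have h0 : g 0 = ∑ j, c j * φ (y j) := by
      simp [hg]
    rw [IsLocalMax, IsMaxFilter, h0]
    exact hmax
  constructor
  · have := hlm.deriv_eq_zero
    rw [(hdg 0).deriv] at this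
    simpa [hg1] using this
  · have := stmt18_second_deriv_nonpos hdg hdg1 hcg2 hlm
    simpa [hg2] using this

lemma stmt18_psi_facts (φ ψ : ℝ → ℝ)
    (hφC : ContDiff ℝ 2 φ)
    (hodd : ∀ x : ℝ, φ (-x) = -φ x)
    (hφ' : ∀ x : ℝ, 0 < deriv φ x)
    (hφ'' : ∀ x : ℝ, x ≠ 0 → x * deriv (deriv φ) x < 0)
    (hψ : ∀ y : ℝ, 0 < y → y ≤ deriv φ 0 → 0 ≤ ψ y ∧ deriv φ (ψ y) = y)
    (hψinv : ∀ x : ℝ, 0 ≤ x → ψ (deriv φ x) = x) :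
    (∀ x : ℝ, deriv φ (-x) = deriv φ x) ∧
    (∀ x : ℝ, deriv (deriv φ) (-x) = -(deriv (deriv φ) x)) ∧
    StrictAntiOn (deriv φ) (Set.Ici 0) ∧
    (∀ x : ℝ, x ≠ 0 → deriv φ x < deriv φ 0) ∧
    (∀ y ∈ Set.Ioo 0 (deriv φ 0), 0 < ψ y ∧ HasDerivAt ψ (deriv ψ y) y ∧
      deriv ψ y < 0 ∧ deriv (deriv φ) (ψ y) * deriv ψ y = 1) := by
  have hφC' : ContDiff ℝ (1+1) φ := by
    convert hφC using 1
    norm_num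
  have hφ1 : ContDiff ℝ 1 (deriv φ) := (contDiff_succ_iff_deriv.mp hφC').2.2
  have hdφ : ∀ x, HasDerivAt φ (deriv φ x) x := fun x =>
    (hφC.differentiable (by norm_num)).differentiableAt.hasDerivAt
  have hdφ' : ∀ x, HasDerivAt (deriv φ) (deriv (deriv φ) x) x := fun x =>
    (hφ1.differentiable one_ne_zero).differentiableAt.hasDerivAt
  -- evenness of deriv φ
  have heven : ∀ x : ℝ, deriv φ (-x) = deriv φ x := by
    intro x
    have hneg : HasDerivAt (fun s : ℝ => -s) (-1 : ℝ) x := by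
      exact hasDerivAt_neg x
    have lhs : HasDerivAt (fun s : ℝ => φ (-s)) (deriv φ (-x) * (-1)) x :=
      (hdφ (-x)).comp x hneg
    have rhs : HasDerivAt (fun s : ℝ => -φ s) (-(deriv φ x)) x := (hdφ x).neg
    have lhs' : HasDerivAt (fun s : ℝ => -φ s) (deriv φ (-x) * (-1)) x := by
      apply lhs.congr_of_eventuallyEq
      filter_upwards with s
      rw [hodd s]
    have := lhs'.unique rhs
    linarith
  -- oddness of the second derivative
  have hodd'' : ∀ x : ℝ, deriv (deriv φ) (-x) = -(deriv (deriv φ) x) := by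
    intro x
    have hneg : HasDerivAt (fun s : ℝ => -s) (-1 : ℝ) x := by
      exact hasDerivAt_neg x
    have lhs : HasDerivAt (fun s : ℝ => deriv φ (-s)) (deriv (deriv φ) (-x) * (-1)) x :=
      (hdφ' (-x)).comp x hneg
    have lhs' : HasDerivAt (deriv φ) (deriv (deriv φ) (-x) * (-1)) x := by
      apply lhs.congr_of_eventuallyEq
      filter_upwards with s
      rw [heven s]
    have := lhs'.unique (hdφ' x)
    linarith
  -- strict antitonicity of deriv φ on [0, ∞)
  have hanti : StrictAntiOn (deriv φ) (Set.Ici 0) := by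
    apply strictAntiOn_of_deriv_neg (convex_Ici 0)
      (hφ1.continuous.continuousOn)
    intro x hx
    rw [interior_Ici, Set.mem_Ioi] at hx
    have := hφ'' x (ne_of_gt hx)
    nlinarith [hx, this]
  -- maximum of deriv φ at 0
  have hmax : ∀ x : ℝ, x ≠ 0 → deriv φ x < deriv φ 0 := by
    intro x hx
    rcases lt_or_gt_of_ne hx with h | h
    · rw [← heven x]
      exact hanti (Set.mem_Ici.mpr (le_refl 0)) (Set.mem_Ici.mpr (le_of_lt (by linarith : (0:ℝ) < -x))) (by linarith)
    · exact hanti (Set.mem_Ici.mpr (le_refl 0)) (Set.mem_Ici.mpr (le_of_lt h)) h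
  refine ⟨heven, hodd'', hanti, hmax, ?_⟩
  intro y hy
  obtain ⟨hy0, hy1⟩ := hy
  obtain ⟨hψ0, hψeq⟩ := hψ y hy0 (le_of_lt hy1)
  have hψpos : 0 < ψ y := by
    rcases lt_or_eq_of_le hψ0 with h | h
    · exact h
    · exfalso
      rw [← h] at hψeq
      rw [hψeq] at hy1
      exact lt_irrefl _ hy1
  -- strict antitonicity of ψ on (0, deriv φ 0]
  have hψanti : ∀ y1 y2 : ℝ, 0 < y1 → y1 < y2 → y2 ≤ deriv φ 0 → ψ y2 < ψ y1 := by
    intro y1 y2 h1 h12 h2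
    obtain ⟨ha1, he1⟩ := hψ y1 h1 (by linarith)
    obtain ⟨ha2, he2⟩ := hψ y2 (by linarith) h2
    by_contra hcon
    push_neg at hcon
    have := hanti.antitoneOn (Set.mem_Ici.mpr ha1) (Set.mem_Ici.mpr ha2) hcon
    rw [he1, he2] at this
    linarith
  -- continuity of ψ at y
  have hψcont : ContinuousAt ψ y := by
    rw [Metric.continuousAt_iff]
    intro ε hε
    set x := ψ y with hxdef
    set ε₀ : ℝ := min (ε/2) (x/2) with hε₀def
    have hε₀pos : 0 < ε₀ := lt_min (by linarith) (by linarith)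
    have hxε₀ : 0 < x - ε₀ := by
      have : ε₀ ≤ x/2 := min_le_right _ _
      linarith
    have hlo : deriv φ (x + ε₀) < y := by
      rw [← hψeq]
      exact hanti (Set.mem_Ici.mpr (le_of_lt hψpos))
        (Set.mem_Ici.mpr (by linarith)) (by linarith)
    have hhi : y < deriv φ (x - ε₀) := by
      rw [← hψeq]
      exact hanti (Set.mem_Ici.mpr (by linarith)) (Set.mem_Ici.mpr (le_of_lt hψpos))
        (by linarith)
    have hhi' : deriv φ (x - ε₀) < deriv φ 0 :=
      hanti (Set.mem_Ici.mpr (le_refl 0)) (Set.mem_Ici.mpr (le_of_lt hxε₀)) hxε₀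
    refine ⟨min (y - deriv φ (x + ε₀)) (deriv φ (x - ε₀) - y), lt_min (by linarith) (by linarith), ?_⟩
    intro y' hy'
    rw [Real.dist_eq] at hy'
    have hy'1 : deriv φ (x + ε₀) < y' := by
      have := abs_lt.mp (lt_of_lt_of_le hy' (min_le_left _ _))
      linarith [this.1]
    have hy'2 : y' < deriv φ (x - ε₀) := by
      have := abs_lt.mp (lt_of_lt_of_le hy' (min_le_right _ _))
      linarith [this.2]
    have hy'pos : 0 < y' := lt_trans (hφ' (x + ε₀)) hy'1
    have hy'le : y' ≤ deriv φ 0 := le_of_lt (lt_trans hy'2 hhi')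
    -- ψ y' ∈ (x - ε₀, x + ε₀)
    have hub : ψ y' < x + ε₀ := by
      have := hψanti (deriv φ (x + ε₀)) y' (hφ' _) hy'1 hy'le
      rwa [hψinv (x + ε₀) (by linarith)] at this
    have hlb : x - ε₀ < ψ y' := by
      have := hψanti y' (deriv φ (x - ε₀)) hy'pos hy'2 (le_of_lt hhi')
      rwa [hψinv (x - ε₀) (le_of_lt hxε₀)] at this
    rw [Real.dist_eq]
    have : ε₀ ≤ ε/2 := min_le_left _ _
    rw [abs_lt]
    constructor <;> linarith
  -- the second derivative at ψ y is negative
  have hφ''neg : deriv (deriv φ) (ψ y) < 0 := by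
    have := hφ'' (ψ y) (ne_of_gt hψpos)
    nlinarith
  -- inverse function theorem
  have hder : HasDerivAt ψ (deriv (deriv φ) (ψ y))⁻¹ y := by
    apply HasDerivAt.of_local_left_inverse hψcont (hdφ' (ψ y)) (ne_of_lt hφ''neg)
    have hopen : Set.Ioo (0:ℝ) (deriv φ 0) ∈ 𝓝 y := isOpen_Ioo.mem_nhds ⟨hy0, hy1⟩
    filter_upwards [hopen] with y' hy'
    exact (hψ y' hy'.1 (le_of_lt hy'.2)).2
  have hdval : deriv ψ y = (deriv (deriv φ) (ψ y))⁻¹ := hder.deriv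
  refine ⟨hψpos, by rw [hdval]; exact hder, ?_, ?_⟩
  · rw [hdval]
    exact inv_neg''.mpr hφ''neg
  · rw [hdval]
    exact mul_inv_cancel₀ (ne_of_lt hφ''neg)

-- pointwise consequence of (A4): for q < p, p·ψ'(βp)·ψ(βq) ≤ q·ψ'(βq)·ψ(βp)
lemma stmt18_A4_pointwise {ψ : ℝ → ℝ} {y0 : ℝ}
    (hdψ : ∀ y ∈ Set.Ioo 0 y0, HasDerivAt ψ (deriv ψ y) y)
    (hψpos : ∀ y ∈ Set.Ioo 0 y0, 0 < ψ y)
    (hA4 : ∀ p q : ℝ, 0 < q → q < p →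
      StrictAntiOn (fun β => ψ (β * p) / ψ (β * q)) (Set.Ioo 0 (y0 / p)))
    {p q β : ℝ} (hq : 0 < q) (hqp : q < p) (hβ : 0 < β) (hβp : β * p < y0) :
    p * deriv ψ (β * p) * ψ (β * q) ≤ q * deriv ψ (β * q) * ψ (β * p) := by
  have hp : 0 < p := lt_trans hq hqp
  have hmemp : β * p ∈ Set.Ioo 0 y0 := ⟨by positivity, hβp⟩
  have hmemq : β * q ∈ Set.Ioo 0 y0 := ⟨by positivity, by nlinarith⟩
  have hψqpos : 0 < ψ (β * q) := hψpos _ hmemq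
  have hlp : HasDerivAt (fun t : ℝ => t * p) p β := by
    simpa using (hasDerivAt_id β).mul_const p
  have hlq : HasDerivAt (fun t : ℝ => t * q) q β := by
    simpa using (hasDerivAt_id β).mul_const q
  have h1 : HasDerivAt (fun t : ℝ => ψ (t * p)) (deriv ψ (β * p) * p) β :=
    (hdψ _ hmemp).comp β hlp
  have h2 : HasDerivAt (fun t : ℝ => ψ (t * q)) (deriv ψ (β * q) * q) β :=
    (hdψ _ hmemq).comp β hlq
  have hr : HasDerivAt (fun t : ℝ => ψ (t * p) / ψ (t * q))
      ((deriv ψ (β * p) * p * ψ (β * q) - ψ (β * p) * (deriv ψ (β * q) * q)) /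
        (ψ (β * q)) ^ 2) β := h1.div h2 (ne_of_gt hψqpos)
  have hβmem : β ∈ Set.Ioo 0 (y0 / p) := ⟨hβ, (lt_div_iff₀ hp).mpr hβp⟩
  have := stmt18_deriv_nonpos_of_strictAntiOn hβmem hr (hA4 p q hq hqp)
  have hsq : (0:ℝ) < (ψ (β * q)) ^ 2 := by positivity
  rw [div_nonpos_iff] at this
  rcases this with ⟨h, h'⟩ | ⟨h, _⟩
  · nlinarith
  · nlinarith

-- comparison lemma from (A2): for qj < qi and β ≤ t,
--  ψ'(β qi)·ψ'(t qj) ≤ ψ'(β qj)·ψ'(t qi)  (all derivatives negative)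
lemma stmt18_A2_compare {ψ : ℝ → ℝ} {y0 : ℝ}
    (hψneg : ∀ y ∈ Set.Ioo 0 y0, deriv ψ y < 0)
    (hA2 : ∀ p q : ℝ, 0 < q → q < p →
      StrictMonoOn (fun β => deriv ψ (β * p) / deriv ψ (β * q)) (Set.Ioo 0 (y0 / p)))
    {qj qi β t : ℝ} (hj : 0 < qj) (hji : qj < qi) (hβ : 0 < β) (hβt : β ≤ t)
    (ht : t * qi < y0) :
    deriv ψ (β * qi) * deriv ψ (t * qj) ≤ deriv ψ (β * qj) * deriv ψ (t * qi) := by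
  have hi : 0 < qi := lt_trans hj hji
  have ht0 : 0 < t := lt_of_lt_of_le hβ hβt
  have hβi : β * qi < y0 := lt_of_le_of_lt (by nlinarith) ht
  have hβmem : β ∈ Set.Ioo 0 (y0 / qi) := ⟨hβ, (lt_div_iff₀ hi).mpr hβi⟩
  have htmem : t ∈ Set.Ioo 0 (y0 / qi) := ⟨ht0, (lt_div_iff₀ hi).mpr ht⟩
  have hmono := hA2 qi qj hj hji
  have hβj : deriv ψ (β * qj) < 0 := hψneg _ ⟨by positivity, by nlinarith⟩
  have htj : deriv ψ (t * qj) < 0 := hψneg _ ⟨by positivity, by nlinarith⟩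
  rcases eq_or_lt_of_le hβt with h | h
  · subst h
    exact le_of_eq (mul_comm _ _)
  · have hle := le_of_lt (hmono hβmem htmem h)
    simp only at hle
    have hBD : 0 < deriv ψ (β * qj) * deriv ψ (t * qj) := mul_pos_of_neg_of_neg hβj htj
    have h1 := mul_le_mul_of_nonneg_right hle (le_of_lt hBD)
    have key : ∀ a b d : ℝ, b ≠ 0 → a / b * (b * d) = a * d := fun a b d hb => by
      rw [show a / b * (b * d) = a / b * b * d by ring, div_mul_cancel₀ a hb]
    have e1 := key (deriv ψ (β * qi)) (deriv ψ (β * qj)) (deriv ψ (t * qj)) (ne_of_lt hβj)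
    have e2 : deriv ψ (t * qi) / deriv ψ (t * qj) * (deriv ψ (β * qj) * deriv ψ (t * qj))
        = deriv ψ (β * qj) * deriv ψ (t * qi) := by
      rw [show deriv ψ (β * qj) * deriv ψ (t * qj)
          = deriv ψ (t * qj) * deriv ψ (β * qj) by ring,
        key _ _ _ (ne_of_lt htj)]
      ring
    rw [e1, e2] at h1
    exact h1

-- variation bound for qj < qi on [β,γ]:
--  qi·|ψ'(βqi)|·(ψ(βqj) − ψ(γqj)) ≤ qj·|ψ'(βqj)|·(ψ(βqi) − ψ(γqi))
lemma stmt18_variation_small {ψ : ℝ → ℝ} {y0 : ℝ}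
    (hdψ : ∀ y ∈ Set.Ioo 0 y0, HasDerivAt ψ (deriv ψ y) y)
    (hψneg : ∀ y ∈ Set.Ioo 0 y0, deriv ψ y < 0)
    (hA2 : ∀ p q : ℝ, 0 < q → q < p →
      StrictMonoOn (fun β => deriv ψ (β * p) / deriv ψ (β * q)) (Set.Ioo 0 (y0 / p)))
    {qj qi β γ : ℝ} (hj : 0 < qj) (hji : qj < qi) (hβ : 0 < β) (hβγ : β ≤ γ)
    (hγ : γ * qi < y0) :
    qi * (-(deriv ψ (β * qi))) * (ψ (β * qj) - ψ (γ * qj)) ≤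
      qj * (-(deriv ψ (β * qj))) * (ψ (β * qi) - ψ (γ * qi)) := by
  have hi : 0 < qi := lt_trans hj hji
  set θ : ℝ → ℝ := fun t =>
    qj * (-(deriv ψ (β * qj))) * ψ (t * qi) - qi * (-(deriv ψ (β * qi))) * ψ (t * qj)
    with hθdef
  have hmem : ∀ t ∈ Set.Icc β γ, t * qi ∈ Set.Ioo 0 y0 ∧ t * qj ∈ Set.Ioo 0 y0 := by
    intro t ht
    have ht0 : 0 < t := lt_of_lt_of_le hβ ht.1
    constructor
    · exact ⟨by positivity, lt_of_le_of_lt (by nlinarith [ht.2]) hγ⟩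
    · exact ⟨by positivity, by nlinarith [ht.2]⟩
  have hder : ∀ t ∈ Set.Icc β γ, HasDerivAt θ
      (qj * (-(deriv ψ (β * qj))) * (deriv ψ (t * qi) * qi) -
        qi * (-(deriv ψ (β * qi))) * (deriv ψ (t * qj) * qj)) t := by
    intro t ht
    obtain ⟨hm1, hm2⟩ := hmem t ht
    have hli : HasDerivAt (fun s : ℝ => s * qi) qi t := by
      simpa using (hasDerivAt_id t).mul_const qi
    have hlj : HasDerivAt (fun s : ℝ => s * qj) qj t := by
      simpa using (hasDerivAt_id t).mul_const qj
    exact ((((hdψ _ hm1).comp t hli)).const_mul _).sub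
      ((((hdψ _ hm2).comp t hlj)).const_mul _)
  have hanti : AntitoneOn θ (Set.Icc β γ) := by
    apply antitoneOn_of_deriv_nonpos (convex_Icc β γ)
    · exact fun t ht => (hder t ht).continuousAt.continuousWithinAt
    · intro t ht
      rw [interior_Icc] at ht
      exact (hder t (Set.mem_Icc_of_Ioo ht)).differentiableAt.differentiableWithinAt
    · intro t ht
      rw [interior_Icc] at ht
      have htIcc := Set.mem_Icc_of_Ioo ht
      rw [(hder t htIcc).deriv]
      have hcmp := stmt18_A2_compare hψneg hA2 hj hji hβ (le_of_lt ht.1)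
        (hmem t htIcc).1.2
      have hqq : (0:ℝ) ≤ qj * qi := by positivity
      have h2 := mul_le_mul_of_nonneg_left hcmp hqq
      nlinarith [h2]
  have hθ := hanti (Set.left_mem_Icc.mpr hβγ) (Set.right_mem_Icc.mpr hβγ) hβγ
  simp only [hθdef] at hθ
  nlinarith [hθ]

lemma stmt18_branch {n : ℕ} (hn : 1 ≤ n) (φ ψ : ℝ → ℝ)
    (hφ' : ∀ x : ℝ, 0 < deriv φ x)
    (hmaxφ : ∀ x : ℝ, x ≠ 0 → deriv φ x < deriv φ 0)
    (heven : ∀ x : ℝ, deriv φ (-x) = deriv φ x)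
    (hodd'' : ∀ x : ℝ, deriv (deriv φ) (-x) = -(deriv (deriv φ) x))
    (hψinv : ∀ x : ℝ, 0 ≤ x → ψ (deriv φ x) = x)
    (hψfacts : ∀ y ∈ Set.Ioo 0 (deriv φ 0), 0 < ψ y ∧ HasDerivAt ψ (deriv ψ y) y ∧
      deriv ψ y < 0 ∧ deriv (deriv φ) (ψ y) * deriv ψ y = 1)
    (c l q : Fin (n+1) → ℝ) (hc : ∀ j, 0 < c j) (hl : ∀ j, 0 < l j)
    (hq : ∀ j, q j = l j / c j) (b : ℝ)
    (i : Fin (n+1)) (x : Fin (n+1) → ℝ)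
    (hxb : ∑ j, l j * x j = b)
    (hconds : ∀ w : Fin (n+1) → ℝ, (∑ j, l j * w j = 0) →
      (∑ j, c j * (deriv φ (x j) * w j) = 0) ∧
      (∑ j, c j * (deriv (deriv φ) (x j) * w j ^ 2) ≤ 0))
    (hneg : x i < 0) (hpos : ∀ j, j ≠ i → 0 < x j) :
    ∃ β : ℝ, 0 < β ∧ (∀ j, β * q j < deriv φ 0) ∧
      ((∑ j ∈ Finset.univ.erase i, l j * q j * (-(deriv ψ (β * q j)))) ≤
        l i * q i * (-(deriv ψ (β * q i)))) ∧
      ((∑ j, l j * ψ (β * q j)) - 2 * (l i * ψ (β * q i)) = b) := by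
  have hqpos : ∀ j, 0 < q j := fun j => (hq j) ▸ div_pos (hl j) (hc j)
  -- sums of pair-supported vectors
  have pair_sum : ∀ (F : Fin (n+1) → ℝ) (s t : Fin (n+1)) (A B : ℝ), s ≠ t →
      ∑ j, F j * (if j = s then A else if j = t then B else 0) = F s * A + F t * B := by
    intro F s t A B hst
    have hrw : ∀ j : Fin (n+1), F j * (if j = s then A else if j = t then B else 0)
        = (if j = s then F s * A else 0) + (if j = t then F t * B else 0) := by
      intro j
      by_cases h1 : j = s
      · subst h1; simp [hst]
      · by_cases h2 : j = t
        · subst h2; simp [h1]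
        · simp [h1, h2]
    rw [Finset.sum_congr rfl (fun j _ => hrw j), Finset.sum_add_distrib]
    simp
  -- the Lagrange multiplier
  set β := deriv φ (x i) / q i with hβdef
  have hβpos : 0 < β := div_pos (hφ' (x i)) (hqpos i)
  have hβq : ∀ j, deriv φ (x j) = β * q j := by
    intro j
    by_cases hji : j = i
    · subst hji
      rw [hβdef, div_mul_eq_mul_div, mul_div_assoc, div_self (hqpos _).ne', mul_one]
    · have hij : i ≠ j := fun h => hji h.symm
      have hw : ∑ m, l m * (if m = i then l j else if m = j then -(l i) else 0) = 0 := by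
        rw [pair_sum l i j (l j) (-(l i)) hij]; ring
      have h1 := (hconds _ hw).1
      rw [show (∑ m, c m * (deriv φ (x m) * (if m = i then l j else if m = j then -(l i) else 0)))
          = ∑ m, (c m * deriv φ (x m)) * (if m = i then l j else if m = j then -(l i) else 0) from
          Finset.sum_congr rfl (fun m _ => by ring),
        pair_sum _ i j _ _ hij] at h1
      have key : deriv φ (x j) * q i = deriv φ (x i) * q j := by
        rw [hq i, hq j]
        have hci := (hc i).ne'
        have hcj := (hc j).ne'
        field_simp
        nlinarith [h1]
      rw [hβdef, div_mul_eq_mul_div, ← key, mul_div_assoc, div_self (hqpos i).ne', mul_one]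
  have hxne : ∀ j, x j ≠ 0 := by
    intro j
    by_cases hji : j = i
    · subst hji; exact ne_of_lt hneg
    · exact ne_of_gt (hpos j hji)
  have hrange : ∀ j, β * q j < deriv φ 0 := fun j => (hβq j) ▸ hmaxφ _ (hxne j)
  have hmem : ∀ j, β * q j ∈ Set.Ioo 0 (deriv φ 0) :=
    fun j => ⟨mul_pos hβpos (hqpos j), hrange j⟩
  -- coordinates
  have hcoordpos : ∀ j, j ≠ i → ψ (β * q j) = x j := by
    intro j hji
    rw [← hβq j]
    exact hψinv _ (le_of_lt (hpos j hji))
  have hcoordneg : ψ (β * q i) = -(x i) := by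
    rw [← hβq i, ← heven (x i)]
    exact hψinv _ (by linarith)
  -- hyperplane identity
  have hbid : (∑ j, l j * ψ (β * q j)) - 2 * (l i * ψ (β * q i)) = b := by
    rw [← hxb,
      ← Finset.add_sum_erase _ (fun j => l j * ψ (β * q j)) (Finset.mem_univ i),
      ← Finset.add_sum_erase _ (fun j => l j * x j) (Finset.mem_univ i), hcoordneg]
    have he : ∑ j ∈ Finset.univ.erase i, l j * ψ (β * q j)
        = ∑ j ∈ Finset.univ.erase i, l j * x j :=
      Finset.sum_congr rfl (fun j hj => by rw [hcoordpos j (Finset.mem_erase.mp hj).1])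
    rw [he]; ring
  -- links between second derivative of φ and derivative of ψ
  have hψneg : ∀ j, deriv ψ (β * q j) < 0 := fun j => (hψfacts _ (hmem j)).2.2.1
  have hlink : ∀ j, j ≠ i → deriv (deriv φ) (x j) * deriv ψ (β * q j) = 1 := by
    intro j hji
    have := (hψfacts _ (hmem j)).2.2.2
    rwa [hcoordpos j hji] at this
  have hlinki : deriv (deriv φ) (x i) * deriv ψ (β * q i) = -1 := by
    have h0 := (hψfacts _ (hmem i)).2.2.2
    rw [hcoordneg, hodd''] at h0
    linarith [h0]
  -- second-order test vector
  set A := ∑ j ∈ Finset.univ.erase i, l j * q j * (-(deriv ψ (β * q j))) with hAdef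
  have hApos : 0 < A := by
    apply Finset.sum_pos
    · intro j hj
      have := hψneg j
      have h1 : 0 < -(deriv ψ (β * q j)) := by linarith
      exact mul_pos (mul_pos (hl j) (hqpos j)) h1
    · have : (Finset.univ.erase i).Nonempty := by
        rw [← Finset.card_pos, Finset.card_erase_of_mem (Finset.mem_univ i),
          Finset.card_univ, Fintype.card_fin]
        omega
      exact this
  set v : Fin (n+1) → ℝ := fun m =>
    if m = i then -A else l i * (q m * (-(deriv ψ (β * q m)))) with hvdef
  have hw : ∑ m, l m * v m = 0 := by
    rw [← Finset.add_sum_erase _ (fun m => l m * v m) (Finset.mem_univ i)]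
    have hvi : v i = -A := by rw [hvdef]; simp
    have he : ∑ m ∈ Finset.univ.erase i, l m * v m = l i * A := by
      rw [hAdef, Finset.mul_sum]
      apply Finset.sum_congr rfl
      intro m hm
      rw [hvdef]
      simp only [if_neg (Finset.mem_erase.mp hm).1]
      ring
    rw [hvi, he]; ring
  have hQ := (hconds v hw).2
  rw [← Finset.add_sum_erase _ (fun m => c m * (deriv (deriv φ) (x m) * v m ^ 2))
    (Finset.mem_univ i)] at hQ
  have hvi : v i = -A := by rw [hvdef]; simp
  have hterm : ∀ m ∈ Finset.univ.erase i,
      c m * (deriv (deriv φ) (x m) * v m ^ 2)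
        = -(l i ^ 2 * (l m * q m * (-(deriv ψ (β * q m))))) := by
    intro m hm
    have hmi := (Finset.mem_erase.mp hm).1
    have hlm : l m = c m * q m := by
      rw [hq m]; field_simp [(hc m).ne']
    rw [hvdef]
    simp only [if_neg hmi]
    rw [hlm]
    linear_combination (c m * l i ^ 2 * q m ^ 2 * deriv ψ (β * q m)) * (hlink m hmi)
  have hsum2 : ∑ m ∈ Finset.univ.erase i, c m * (deriv (deriv φ) (x m) * v m ^ 2)
      = -(l i ^ 2 * A) := by
    rw [Finset.sum_congr rfl hterm, hAdef, Finset.mul_sum, ← Finset.sum_neg_distrib]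
  rw [hsum2, hvi] at hQ
  -- extract A ≤ H i
  have hDi : 0 < -(deriv ψ (β * q i)) := by linarith [hψneg i]
  have h1 : c i * deriv (deriv φ) (x i) * A ^ 2 ≤ l i ^ 2 * A := by nlinarith [hQ]
  have e : deriv (deriv φ) (x i) * (-(deriv ψ (β * q i))) = 1 := by
    linear_combination -hlinki
  have h2 : c i * A ^ 2 ≤ l i ^ 2 * A * (-(deriv ψ (β * q i))) := by
    have h3 := mul_le_mul_of_nonneg_right h1 (le_of_lt hDi)
    have e2 : (c i * deriv (deriv φ) (x i) * A ^ 2) * (-(deriv ψ (β * q i)))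
        = c i * A ^ 2 := by
      linear_combination (c i * A ^ 2) * e
    rw [e2] at h3
    exact h3
  have hqc : q i * c i = l i := by rw [hq i]; field_simp [(hc i).ne']
  have hfin : A ≤ l i * q i * (-(deriv ψ (β * q i))) := by
    have h4 : l i ^ 2 * A * (-(deriv ψ (β * q i)))
        = (l i * q i * (-(deriv ψ (β * q i)))) * (c i * A) := by
      linear_combination (l i * A * deriv ψ (β * q i)) * hqc
    rw [h4] at h2
    have hcA : 0 < c i * A := mul_pos (hc i) hApos
    have h6 : A * (c i * A) ≤ (l i * q i * (-(deriv ψ (β * q i)))) * (c i * A) := by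
      linarith [h2]
    exact (mul_le_mul_iff_of_pos_right hcA).mp h6
  exact ⟨β, hβpos, hrange, hfin, hbid⟩

-- The analytic endgame: two branches of critical points with second-order
-- conditions in different orthants and the same hyperplane value are impossible.
lemma stmt18_endgame {n : ℕ} (hn : 2 ≤ n) (ψ : ℝ → ℝ) (y0 : ℝ)
    (hψpos : ∀ y ∈ Set.Ioo 0 y0, 0 < ψ y)
    (hdψ : ∀ y ∈ Set.Ioo 0 y0, HasDerivAt ψ (deriv ψ y) y)
    (hψneg : ∀ y ∈ Set.Ioo 0 y0, deriv ψ y < 0)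
    (hA2 : ∀ p q' : ℝ, 0 < q' → q' < p →
      StrictMonoOn (fun β => deriv ψ (β * p) / deriv ψ (β * q')) (Set.Ioo 0 (y0 / p)))
    (hA4 : ∀ p q' : ℝ, 0 < q' → q' < p →
      StrictAntiOn (fun β => ψ (β * p) / ψ (β * q')) (Set.Ioo 0 (y0 / p)))
    (l q : Fin (n+1) → ℝ) (hl : ∀ j, 0 < l j) (hqpos : ∀ j, 0 < q j)
    (hqinj : Function.Injective q)
    (i k : Fin (n+1)) (hik : q i < q k) (β γ b : ℝ)
    (hβ : 0 < β) (hγ : 0 < γ)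
    (hβr : ∀ j, β * q j < y0) (hγr : ∀ j, γ * q j < y0)
    (h2β : (∑ j ∈ Finset.univ.erase i, l j * q j * (-(deriv ψ (β * q j)))) ≤
      l i * q i * (-(deriv ψ (β * q i))))
    (h2γ : (∑ j ∈ Finset.univ.erase k, l j * q j * (-(deriv ψ (γ * q j)))) ≤
      l k * q k * (-(deriv ψ (γ * q k))))
    (hbβ : (∑ j, l j * ψ (β * q j)) - 2 * (l i * ψ (β * q i)) = b)
    (hbγ : (∑ j, l j * ψ (γ * q j)) - 2 * (l k * ψ (γ * q k)) = b) : False := by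
  have hikne : i ≠ k := fun h => absurd (h ▸ hik) (lt_irrefl _)
  set H : ℝ → Fin (n+1) → ℝ := fun t j => l j * q j * (-(deriv ψ (t * q j))) with hH
  set v : ℝ → Fin (n+1) → ℝ := fun t j => l j * ψ (t * q j) with hv
  have h2β' : (∑ j ∈ Finset.univ.erase i, H β j) ≤ H β i := by
    simp only [hH]; exact h2β
  have h2γ' : (∑ j ∈ Finset.univ.erase k, H γ j) ≤ H γ k := by
    simp only [hH]; exact h2γ
  have hbβ' : (∑ j, v β j) - 2 * v β i = b := by simp only [hv]; exact hbβ
  have hbγ' : (∑ j, v γ j) - 2 * v γ k = b := by simp only [hv]; exact hbγ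
  have hmemβ : ∀ j, β * q j ∈ Set.Ioo 0 y0 := fun j => ⟨mul_pos hβ (hqpos j), hβr j⟩
  have hmemγ : ∀ j, γ * q j ∈ Set.Ioo 0 y0 := fun j => ⟨mul_pos hγ (hqpos j), hγr j⟩
  have hHβpos : ∀ j, 0 < H β j := by
    intro j
    have := hψneg _ (hmemβ j)
    have h1 : 0 < -(deriv ψ (β * q j)) := by linarith
    exact mul_pos (mul_pos (hl j) (hqpos j)) h1
  have hHγpos : ∀ j, 0 < H γ j := by
    intro j
    have := hψneg _ (hmemγ j)
    have h1 : 0 < -(deriv ψ (γ * q j)) := by linarith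
    exact mul_pos (mul_pos (hl j) (hqpos j)) h1
  have hvβpos : ∀ j, 0 < v β j := fun j => mul_pos (hl j) (hψpos _ (hmemβ j))
  have hvγpos : ∀ j, 0 < v γ j := fun j => mul_pos (hl j) (hψpos _ (hmemγ j))
  -- a third index
  have hcard : ((Finset.univ.erase i).erase k).Nonempty := by
    rw [← Finset.card_pos]
    have h1 : k ∈ Finset.univ.erase i :=
      Finset.mem_erase.mpr ⟨fun h => hikne h.symm, Finset.mem_univ k⟩
    rw [Finset.card_erase_of_mem h1, Finset.card_erase_of_mem (Finset.mem_univ i),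
      Finset.card_univ, Fintype.card_fin]
    omega
  obtain ⟨j₂, hj₂⟩ := hcard
  have hj₂i : j₂ ≠ i := (Finset.mem_erase.mp (Finset.mem_erase.mp hj₂).2).1
  have hj₂k : j₂ ≠ k := (Finset.mem_erase.mp hj₂).1
  -- split: sum over erase i = H k + sum over (erase i).erase k
  have hki : k ∈ Finset.univ.erase i :=
    Finset.mem_erase.mpr ⟨fun h => hikne h.symm, Finset.mem_univ k⟩
  have hik' : i ∈ Finset.univ.erase k :=
    Finset.mem_erase.mpr ⟨hikne, Finset.mem_univ i⟩
  have hsplitβ : ∑ j ∈ Finset.univ.erase i, H β j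
      = H β k + ∑ j ∈ (Finset.univ.erase i).erase k, H β j :=
    (Finset.add_sum_erase _ _ hki).symm
  have hsplitγ : ∑ j ∈ Finset.univ.erase k, H γ j
      = H γ i + ∑ j ∈ (Finset.univ.erase k).erase i, H γ j :=
    (Finset.add_sum_erase _ _ hik').symm
  -- strict domination
  have hHβik : H β k < H β i := by
    have hpos2 : 0 < ∑ j ∈ (Finset.univ.erase i).erase k, H β j :=
      Finset.sum_pos (fun j _ => hHβpos j) ⟨j₂, hj₂⟩
    calc H β k < H β k + ∑ j ∈ (Finset.univ.erase i).erase k, H β j := by linarith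
    _ = ∑ j ∈ Finset.univ.erase i, H β j := hsplitβ.symm
    _ ≤ H β i := h2β'
  have hHγki : H γ i < H γ k := by
    have hj₂' : j₂ ∈ (Finset.univ.erase k).erase i :=
      Finset.mem_erase.mpr ⟨hj₂i, Finset.mem_erase.mpr ⟨hj₂k, Finset.mem_univ j₂⟩⟩
    have hpos2 : 0 < ∑ j ∈ (Finset.univ.erase k).erase i, H γ j :=
      Finset.sum_pos (fun j _ => hHγpos j) ⟨j₂, hj₂'⟩
    calc H γ i < H γ i + ∑ j ∈ (Finset.univ.erase k).erase i, H γ j := by linarith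
    _ = ∑ j ∈ Finset.univ.erase k, H γ j := hsplitγ.symm
    _ ≤ H γ k := h2γ'
  -- β < γ via (A2)
  have hβγ : β < γ := by
    by_contra hcon
    push_neg at hcon  -- γ ≤ β
    have hmono := hA2 (q k) (q i) (hqpos i) hik
    have hβmem : β ∈ Set.Ioo 0 (y0 / q k) := ⟨hβ, (lt_div_iff₀ (hqpos k)).mpr (hβr k)⟩
    have hγmem : γ ∈ Set.Ioo 0 (y0 / q k) := ⟨hγ, (lt_div_iff₀ (hqpos k)).mpr (hγr k)⟩
    have hρβ : deriv ψ (β * q k) / deriv ψ (β * q i)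
        = (-(deriv ψ (β * q k))) / (-(deriv ψ (β * q i))) := by
      rw [neg_div_neg_eq]
    have hρle : deriv ψ (γ * q k) / deriv ψ (γ * q i)
        ≤ deriv ψ (β * q k) / deriv ψ (β * q i) := by
      rcases eq_or_lt_of_le hcon with h | h
      · rw [h]
      · exact le_of_lt (hmono hγmem hβmem h)
    have hβi' : 0 < -(deriv ψ (β * q i)) := by have := hψneg _ (hmemβ i); linarith
    have hγi' : 0 < -(deriv ψ (γ * q i)) := by have := hψneg _ (hmemγ i); linarith
    have hLpos : 0 < l k * q k := mul_pos (hl k) (hqpos k)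
    have hL2pos : 0 < l i * q i := mul_pos (hl i) (hqpos i)
    -- H β k < H β i gives ratio at β < (l i q i)/(l k q k)
    have h1 : (-(deriv ψ (β * q k))) / (-(deriv ψ (β * q i))) < (l i * q i) / (l k * q k) := by
      rw [div_lt_div_iff₀ hβi' hLpos]
      have h' := hHβik
      simp only [hH] at h'
      linarith [h']
    have h2 : (l i * q i) / (l k * q k) < (-(deriv ψ (γ * q k))) / (-(deriv ψ (γ * q i))) := by
      rw [div_lt_div_iff₀ hLpos hγi']
      have h' := hHγki
      simp only [hH] at h'
      linarith [h']
    rw [hρβ] at hρle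
    rw [show deriv ψ (γ * q k) / deriv ψ (γ * q i)
        = (-(deriv ψ (γ * q k))) / (-(deriv ψ (γ * q i))) by rw [neg_div_neg_eq]] at hρle
    linarith
  -- pointwise A4 consequence at β for the pair (i,k): H β i * v β k ≤ H β k * v β i
  have hR2 : H β i * v β k ≤ H β k * v β i := by
    have hpt := stmt18_A4_pointwise hdψ hψpos hA4 (hqpos i) hik hβ (hβr k)
    have hll : (0:ℝ) < l i * l k := mul_pos (hl i) (hl k)
    simp only [hH, hv]
    have hm := mul_le_mul_of_nonneg_left hpt (le_of_lt hll)
    linarith [hm]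
  -- per-coordinate variation bounds
  have claim1 : ∀ j ∈ (Finset.univ.erase i).erase k,
      H β i * (v β j - v γ j) ≤ H β j * v β i := by
    intro j hj
    have hji : j ≠ i := (Finset.mem_erase.mp (Finset.mem_erase.mp hj).2).1
    have hqji : q j ≠ q i := fun h => hji (hqinj h)
    rcases lt_or_gt_of_ne hqji with hlt | hgt
    · -- q j < q i : variation lemma
      have hvar := stmt18_variation_small hdψ hψneg hA2 (hqpos j) hlt hβ
        (le_of_lt hβγ) (hγr i)
      have hll : (0:ℝ) < l i * l j := mul_pos (hl i) (hl j)
      have hvγ : 0 < v γ i := hvγpos i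
      have hHβj : 0 < H β j := hHβpos j
      -- multiply hvar by l i * l j and use v γ i ≥ 0
      have h1 : H β i * (v β j - v γ j) ≤ H β j * (v β i - v γ i) := by
        simp only [hH, hv]
        have hm := mul_le_mul_of_nonneg_left hvar (le_of_lt hll)
        linarith [hm]
      have h2 : 0 < H β j * v γ i := mul_pos hHβj hvγ
      nlinarith [h1, h2]
    · -- q i < q j : value bound via A4 pointwise at β
      have hpt := stmt18_A4_pointwise hdψ hψpos hA4 (hqpos i) hgt hβ (hβr j)
      have hll : (0:ℝ) < l i * l j := mul_pos (hl i) (hl j)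
      have h1 : H β i * v β j ≤ H β j * v β i := by
        simp only [hH, hv]
        have hm := mul_le_mul_of_nonneg_left hpt (le_of_lt hll)
        linarith [hm]
      have hvγ : 0 < v γ j := hvγpos j
      have h2 : 0 < H β i * v γ j := mul_pos (hHβpos i) hvγ
      nlinarith [h1, h2]
  -- summing up
  have claim2 : H β i * (∑ j ∈ (Finset.univ.erase i).erase k, (v β j - v γ j))
      ≤ (H β i - H β k) * v β i := by
    rw [Finset.mul_sum]
    calc ∑ j ∈ (Finset.univ.erase i).erase k, H β i * (v β j - v γ j)
        ≤ ∑ j ∈ (Finset.univ.erase i).erase k, H β j * v β i :=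
          Finset.sum_le_sum claim1
    _ = (∑ j ∈ (Finset.univ.erase i).erase k, H β j) * v β i := by
          rw [Finset.sum_mul]
    _ ≤ (H β i - H β k) * v β i := by
          apply mul_le_mul_of_nonneg_right _ (le_of_lt (hvβpos i))
          have := h2β'
          rw [hsplitβ] at this
          linarith
  have claim2' : (∑ j ∈ (Finset.univ.erase i).erase k, (v β j - v γ j))
      ≤ v β i - v β k := by
    have h1 : H β i * (∑ j ∈ (Finset.univ.erase i).erase k, (v β j - v γ j))
        ≤ H β i * (v β i - v β k) := by
      calc H β i * (∑ j ∈ (Finset.univ.erase i).erase k, (v β j - v γ j))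
          ≤ (H β i - H β k) * v β i := claim2
      _ ≤ H β i * v β i - H β i * v β k := by linarith [hR2]
      _ = H β i * (v β i - v β k) := by ring
    exact le_of_mul_le_mul_left h1 (hHβpos i)
  -- step 9 : v γ k < v γ i
  have claim4 : v γ k < v γ i := by
    have hanti := hA4 (q k) (q i) (hqpos i) hik
    have hβmem : β ∈ Set.Ioo 0 (y0 / q k) := ⟨hβ, (lt_div_iff₀ (hqpos k)).mpr (hβr k)⟩
    have hγmem : γ ∈ Set.Ioo 0 (y0 / q k) := ⟨hγ, (lt_div_iff₀ (hqpos k)).mpr (hγr k)⟩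
    have hlt := hanti hβmem hγmem hβγ
    simp only at hlt
    have hψβi : 0 < ψ (β * q i) := hψpos _ (hmemβ i)
    have hψγi : 0 < ψ (γ * q i) := hψpos _ (hmemγ i)
    rw [div_lt_div_iff₀ hψγi hψβi] at hlt
    -- v β k ≤ v β i
    have hvki : v β k ≤ v β i := by
      have h1 : H β i * v β k ≤ H β i * v β i := by
        calc H β i * v β k ≤ H β k * v β i := hR2
        _ ≤ H β i * v β i :=
          mul_le_mul_of_nonneg_right (le_of_lt hHβik) (le_of_lt (hvβpos i))
      exact le_of_mul_le_mul_left h1 (hHβpos i)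
    have h2 : v γ k * v β i < v γ i * v β i := by
      calc v γ k * v β i = (l k * l i) * (ψ (γ * q k) * ψ (β * q i)) := by
            simp only [hv]; ring
      _ < (l k * l i) * (ψ (β * q k) * ψ (γ * q i)) := by
            apply mul_lt_mul_of_pos_left hlt (mul_pos (hl k) (hl i))
      _ = v β k * v γ i := by simp only [hv]; ring
      _ ≤ v β i * v γ i := mul_le_mul_of_nonneg_right hvki (le_of_lt (hvγpos i))
      _ = v γ i * v β i := by ring
    exact lt_of_mul_lt_mul_right h2 (le_of_lt (hvβpos i))
  -- the hyperplane identity forces the opposite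
  have hsumβ : ∑ j, v β j = v β i + v β k + ∑ j ∈ (Finset.univ.erase i).erase k, v β j := by
    rw [← Finset.add_sum_erase _ _ (Finset.mem_univ i), ← Finset.add_sum_erase _ _ hki]
    ring
  have hsumγ : ∑ j, v γ j = v γ i + v γ k + ∑ j ∈ (Finset.univ.erase i).erase k, v γ j := by
    have e : (Finset.univ.erase i).erase k = (Finset.univ.erase k).erase i :=
      Finset.erase_right_comm
    rw [← Finset.add_sum_erase _ _ (Finset.mem_univ k), ← Finset.add_sum_erase _ _ hik', e]
    ring
  have hdiff : (∑ j ∈ (Finset.univ.erase i).erase k, (v β j - v γ j))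
      = (v γ i - v γ k) + (v β i - v β k) := by
    rw [Finset.sum_sub_distrib]
    have h1 : ∑ j, v β j - 2 * v β i = ∑ j, v γ j - 2 * v γ k := by
      linarith [hbβ', hbγ']
    rw [hsumβ, hsumγ] at h1
    linarith
  rw [hdiff] at claim2'
  linarith


/-- Under (A1)–(A4), with `cⱼ > 0`, `lⱼ > 0` and `qⱼ = lⱼ/cⱼ` pairwise
distinct, `f` cannot have local maxima on `P` in two different side orthants: one
point with first coordinate negative and the rest positive, another with second
coordinate negative and the rest positive.  (Dimension is `n + 1 ≥ 3`; indices `0`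
and `1` play the roles of the first and second coordinates.) -/
theorem stmt_18 (n : ℕ) (hn : 2 ≤ n) (φ ψ : ℝ → ℝ)
    (hφC : ContDiff ℝ 2 φ)
    (hodd : ∀ x : ℝ, φ (-x) = -φ x)
    (hφ' : ∀ x : ℝ, 0 < deriv φ x)
    (hφ'' : ∀ x : ℝ, x ≠ 0 → x * deriv (deriv φ) x < 0)
    (hlim : ∃ L : ℝ, Filter.Tendsto φ Filter.atTop (nhds L))
    (hψ : ∀ y : ℝ, 0 < y → y ≤ deriv φ 0 → 0 ≤ ψ y ∧ deriv φ (ψ y) = y)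
    (hψinv : ∀ x : ℝ, 0 ≤ x → ψ (deriv φ x) = x)
    (hA2 : ∀ p q : ℝ, 0 < q → q < p →
      StrictMonoOn (fun β => deriv ψ (β * p) / deriv ψ (β * q))
        (Set.Ioo 0 (deriv φ 0 / p)))
    (hA3 : ∀ qj qn ql : ℝ, 0 < qj → qj < qn → qn < ql →
      StrictMonoOn (fun β => deriv (fun t => deriv ψ (t * qj) / deriv ψ (t * qn)) β /
          deriv (fun t => deriv ψ (t * ql) / deriv ψ (t * qn)) β)
        (Set.Ioo 0 (deriv φ 0 / ql)) ∨
      StrictAntiOn (fun β => deriv (fun t => deriv ψ (t * qj) / deriv ψ (t * qn)) β /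
          deriv (fun t => deriv ψ (t * ql) / deriv ψ (t * qn)) β)
        (Set.Ioo 0 (deriv φ 0 / ql)))
    (hA4 : ∀ p q : ℝ, 0 < q → q < p →
      StrictAntiOn (fun β => ψ (β * p) / ψ (β * q))
        (Set.Ioo 0 (deriv φ 0 / p)))
    (c l q : Fin (n + 1) → ℝ) (hc : ∀ j, 0 < c j) (hl : ∀ j, 0 < l j)
    (hq : ∀ j, q j = l j / c j) (hqinj : Function.Injective q) (b : ℝ)
    (f : EuclideanSpace ℝ (Fin (n + 1)) → ℝ)
    (hf : ∀ x : EuclideanSpace ℝ (Fin (n + 1)), f x = ∑ i, c i * φ (x i))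
    (P : Set (EuclideanSpace ℝ (Fin (n + 1))))
    (hP : P = {x : EuclideanSpace ℝ (Fin (n + 1)) | ∑ j, l j * x j = b}) :
    ¬ ∃ x₀ x₁ : EuclideanSpace ℝ (Fin (n + 1)),
      x₀ ∈ P ∧ x₁ ∈ P ∧
      (∃ ε > 0, ∀ x ∈ P, ‖x - x₀‖ < ε → f x ≤ f x₀) ∧
      (∃ ε > 0, ∀ x ∈ P, ‖x - x₁‖ < ε → f x ≤ f x₁) ∧
      (x₀ 0 < 0 ∧ ∀ j : Fin (n + 1), j ≠ 0 → 0 < x₀ j) ∧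
      (x₁ 1 < 0 ∧ ∀ j : Fin (n + 1), j ≠ 1 → 0 < x₁ j) := by
  rintro ⟨x₀, x₁, hx₀P, hx₁P, ⟨ε₀, hε₀, hm₀⟩, ⟨ε₁, hε₁, hm₁⟩, ⟨hneg₀, hpos₀⟩, ⟨hneg₁, hpos₁⟩⟩
  have hqpos : ∀ j, 0 < q j := fun j => (hq j) ▸ div_pos (hl j) (hc j)
  obtain ⟨heven, hodd'', hanti, hmaxφ, hψfacts⟩ :=
    stmt18_psi_facts φ ψ hφC hodd hφ' hφ'' hψ hψinv
  -- translate local maximality into first/second-order conditions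
  have hconds : ∀ (z : EuclideanSpace ℝ (Fin (n + 1))) (ε : ℝ), 0 < ε → z ∈ P →
      (∀ x ∈ P, ‖x - z‖ < ε → f x ≤ f z) →
      ∀ w : Fin (n + 1) → ℝ, (∑ j, l j * w j = 0) →
        (∑ j, c j * (deriv φ (z j) * w j) = 0) ∧
        (∑ j, c j * (deriv (deriv φ) (z j) * w j ^ 2) ≤ 0) := by
    intro z ε hε hzP hloc w hw
    set wE : EuclideanSpace ℝ (Fin (n + 1)) :=
      (WithLp.equiv 2 (Fin (n + 1) → ℝ)).symm w with hwE
    have happly : ∀ (t : ℝ) (j : Fin (n + 1)), (z + t • wE) j = z j + t * w j := by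
      intro t j
      simp [hwE]
    have hmem : ∀ t : ℝ, (z + t • wE) ∈ P := by
      intro t
      rw [hP]
      rw [hP] at hzP
      simp only [Set.mem_setOf_eq] at hzP ⊢
      have e : ∑ j, l j * ((z + t • wE) j) = ∑ j, (l j * z j + t * (l j * w j)) := by
        apply Finset.sum_congr rfl
        intro j _
        rw [happly]
        ring
      rw [e, Finset.sum_add_distrib, ← Finset.mul_sum, hw, hzP]
      ring
    have hnorm : ∀ t : ℝ, ‖(z + t • wE) - z‖ = |t| * ‖wE‖ := by
      intro t
      rw [add_sub_cancel_left, norm_smul, Real.norm_eq_abs]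
    have hev : ∀ᶠ t in nhds (0:ℝ),
        ∑ j, c j * φ (z j + t * w j) ≤ ∑ j, c j * φ (z j) := by
      have hδ : 0 < ε / (‖wE‖ + 1) := by positivity
      rw [Metric.eventually_nhds_iff]
      refine ⟨ε / (‖wE‖ + 1), hδ, ?_⟩
      intro t ht
      rw [Real.dist_eq, sub_zero] at ht
      have hzin := hloc (z + t • wE) (hmem t) (by
        rw [hnorm]
        have h1 : (0:ℝ) ≤ ‖wE‖ := norm_nonneg _
        have habs : (0:ℝ) ≤ |t| := abs_nonneg t
        calc |t| * ‖wE‖ ≤ |t| * (‖wE‖ + 1) := by nlinarith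
        _ < (ε / (‖wE‖ + 1)) * (‖wE‖ + 1) := by
              exact mul_lt_mul_of_pos_right ht (by linarith)
        _ = ε := by field_simp)
      rw [hf, hf] at hzin
      have e1 : ∑ j, c j * φ ((z + t • wE) j) = ∑ j, c j * φ (z j + t * w j) :=
        Finset.sum_congr rfl (fun j _ => by rw [happly])
      rw [e1] at hzin
      exact hzin
    exact stmt18_max_conditions hφC c (fun j => z j) w hev
  have hcond₀ := hconds x₀ ε₀ hε₀ hx₀P hm₀
  have hcond₁ := hconds x₁ ε₁ hε₁ hx₁P hm₁
  have hb₀ : ∑ j, l j * x₀ j = b := by rw [hP] at hx₀P; exact hx₀P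
  have hb₁ : ∑ j, l j * x₁ j = b := by rw [hP] at hx₁P; exact hx₁P
  obtain ⟨β, hβpos, hβr, h2β, hbβ⟩ :=
    stmt18_branch (by omega) φ ψ hφ' hmaxφ heven hodd'' hψinv hψfacts c l q hc hl hq b
      0 (fun j => x₀ j) hb₀ hcond₀ hneg₀ hpos₀
  obtain ⟨γ, hγpos, hγr, h2γ, hbγ⟩ :=
    stmt18_branch (by omega) φ ψ hφ' hmaxφ heven hodd'' hψinv hψfacts c l q hc hl hq b
      1 (fun j => x₁ j) hb₁ hcond₁ hneg₁ hpos₁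
  have hψpos' : ∀ y ∈ Set.Ioo 0 (deriv φ 0), 0 < ψ y := fun y hy => (hψfacts y hy).1
  have hdψ : ∀ y ∈ Set.Ioo 0 (deriv φ 0), HasDerivAt ψ (deriv ψ y) y :=
    fun y hy => (hψfacts y hy).2.1
  have hψneg : ∀ y ∈ Set.Ioo 0 (deriv φ 0), deriv ψ y < 0 :=
    fun y hy => (hψfacts y hy).2.2.1
  have h01 : (0 : Fin (n + 1)) ≠ 1 := by
    intro h
    have h2 := congrArg Fin.val h
    rw [Fin.val_zero, Fin.val_one'] at h2
    rw [Nat.mod_eq_of_lt (by omega)] at h2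
    exact absurd h2 (by omega)
  have hq01 : q 0 ≠ q 1 := fun h => h01 (hqinj h)
  rcases lt_or_gt_of_ne hq01 with hlt | hgt
  · exact stmt18_endgame hn ψ (deriv φ 0) hψpos' hdψ hψneg hA2 hA4 l q hl hqpos hqinj
      0 1 hlt β γ b hβpos hγpos hβr hγr h2β h2γ hbβ hbγ
  · exact stmt18_endgame hn ψ (deriv φ 0) hψpos' hdψ hψneg hA2 hA4 l q hl hqpos hqinj
      1 0 hgt γ β b hγpos hβpos hγr hβr h2γ h2β hbγ hbβ
end
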